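/- arXiv:1206.6032 — 5 statements merged into one kernel-verified Lean document; each statement's English description precedes it below -/
import Mathlib

section
/- If φ(x̄,ȳ) is a mutually algebraic L(M)-formula and ā ∈ M^{lg(ȳ)}, then both ∃ȳ φ(x̄,ȳ) and φ(x̄,ā) are mutually algebraic. -/
open FirstOrder Language Set

open Classical in
/-- Combine assignments on a set and its complement into one assignment. -/
noncomputable def combine {M α : Type} (s : Set α) (u : ↥s → M) (v : ↥sᶜ → M) : α → M :=
  fun a => if h : a ∈ s then u ⟨a, h⟩ else v ⟨a, h⟩

/-- `φ` is a mutually algebraic `L(M)`-formula: for some `N`, for every proper partition of its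
free variables into nonempty `x̄` (indexed by `s`) and `ȳ` (indexed by `sᶜ`),
`M ⊨ ∀ ȳ ∃^{≤N} x̄ φ(x̄,ȳ)`. -/
def IsMA (L : Language) (M : Type) [L.Structure M] {α : Type} (φ : (L[[M]]).Formula α) : Prop :=
  ∃ N : ℕ, ∀ s : Set α, s.Nonempty → sᶜ.Nonempty → ∀ v : ↥sᶜ → M,
    {u : ↥s → M | φ.Realize (combine s u v)}.encard ≤ (N : ℕ∞)

/-- `T(M)`-equivalence of `L(M)`-formulas: equivalence in every model of the elementary
diagram `T(M)`. -/
def TEquiv (L : Language) (M : Type) [L.Structure M] {α : Type} (φ ψ : (L[[M]]).Formula α) : Prop :=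
  ∀ (N : Type) [(L[[M]]).Structure N], N ⊨ L.elementaryDiagram M →
    ∀ v : α → N, φ.Realize v ↔ ψ.Realize v

/-- A partial equality diagram: a Boolean combination of equalities between variables. -/
inductive IsPED {L' : Language} {α : Type} : L'.Formula α → Prop
  | eq (a b : α) : IsPED (Term.equal (Term.var a) (Term.var b))
  | not {φ : L'.Formula α} : IsPED φ → IsPED φ.not
  | inf {φ ψ : L'.Formula α} : IsPED φ → IsPED ψ → IsPED (φ ⊓ ψ)
  | sup {φ ψ : L'.Formula α} : IsPED φ → IsPED ψ → IsPED (φ ⊔ ψ)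

/-- Positive Boolean combinations of formulas satisfying `P`. -/
inductive PosComb {L' : Language} {α : Type} (P : L'.Formula α → Prop) : L'.Formula α → Prop
  | base {φ : L'.Formula α} : P φ → PosComb P φ
  | inf {φ ψ : L'.Formula α} : PosComb P φ → PosComb P ψ → PosComb P (φ ⊓ ψ)
  | sup {φ ψ : L'.Formula α} : PosComb P φ → PosComb P ψ → PosComb P (φ ⊔ ψ)

/-- Boolean combinations of formulas satisfying `P`. -/
inductive BoolComb {L' : Language} {α : Type} (P : L'.Formula α → Prop) : L'.Formula α → Prop
  | base {φ : L'.Formula α} : P φ → BoolComb P φ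
  | not {φ : L'.Formula α} : BoolComb P φ → BoolComb P φ.not
  | inf {φ ψ : L'.Formula α} : BoolComb P φ → BoolComb P ψ → BoolComb P (φ ⊓ ψ)
  | sup {φ ψ : L'.Formula α} : BoolComb P φ → BoolComb P ψ → BoolComb P (φ ⊔ ψ)

/-- `θ(ȳ,z̄)` is a preferred formula: (modulo `T(M)`) it has the form `∃x̄ (R(x̄,ȳ) ∧ S(x̄,ȳ,z̄))`
where the `ȳ`-variables (indexed by the nonempty set `s`) and `z̄`-variables (indexed by `sᶜ`)
partition its free variables, `R` is quantifier-free and mutually algebraic, and `S` is a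
partial equality diagram. -/
def IsPreferred (L : Language) (M : Type) [L.Structure M] {α : Type}
    (θ : (L[[M]]).Formula α) : Prop :=
  ∃ (s : Set α) (n : ℕ) (R : (L[[M]]).Formula (Fin n ⊕ ↥s)) (S : (L[[M]]).Formula (Fin n ⊕ α)),
    s.Nonempty ∧ R.IsQF ∧ IsMA L M R ∧ IsPED S ∧
    ∀ (N : Type) [(L[[M]]).Structure N], N ⊨ L.elementaryDiagram M →
      ∀ v : α → N, θ.Realize v ↔
        ∃ u : Fin n → N, R.Realize (Sum.elim u (fun a : ↥s => v ↑a)) ∧ S.Realize (Sum.elim u v)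

/-- The class `𝒫`: formulas `T(M)`-equivalent to a positive Boolean combination of preferred
formulas. -/
def InP (L : Language) (M : Type) [L.Structure M] {α : Type} (φ : (L[[M]]).Formula α) : Prop :=
  ∃ ψ : (L[[M]]).Formula α, PosComb (IsPreferred L M) ψ ∧ TEquiv L M φ ψ

/-- `φ` is (a formula with dummy variables added to) a mutually algebraic formula in a subtuple
of the variables. -/
def IsMASub (L : Language) (M : Type) [L.Structure M] {α : Type}
    (φ : (L[[M]]).Formula α) : Prop :=
  ∃ (s : Set α) (ψ : (L[[M]]).Formula ↥s), IsMA L M ψ ∧ φ = ψ.relabel (fun a : ↥s => ↑a)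

/-- `M` is a mutually algebraic structure: every `L(M)`-formula is `T(M)`-equivalent to a
Boolean combination of mutually algebraic formulas (in subtuples of its variables). -/
def IsMAStructure (L : Language) (M : Type) [L.Structure M] : Prop :=
  ∀ (n : ℕ) (φ : (L[[M]]).Formula (Fin n)),
    ∃ ψ : (L[[M]]).Formula (Fin n), BoolComb (IsMASub L M) ψ ∧ TEquiv L M φ ψ

/-- The elementary diagram `T(M)` is model complete: every `L(M)`-formula is `T(M)`-equivalent
to an existential formula. -/
def IsModelComplete (L : Language) (M : Type) [L.Structure M] : Prop :=
  ∀ (n : ℕ) (φ : (L[[M]]).Formula (Fin n)),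
    ∃ (k : ℕ) (ψ : (L[[M]]).Formula (Fin k ⊕ Fin n)), ψ.IsQF ∧
      ∀ (N : Type) [(L[[M]]).Structure N], N ⊨ L.elementaryDiagram M →
        ∀ v : Fin n → N, φ.Realize v ↔ ∃ u : Fin k → N, ψ.Realize (Sum.elim u v)

/-- If `φ(x̄,ȳ)` is mutually algebraic and `ā ∈ M^{lg ȳ}`, then both
`∃ȳ φ(x̄,ȳ)` and `φ(x̄,ā)` are mutually algebraic. -/
theorem stmt1 (L : Language) (M : Type) [L.Structure M] {α β : Type} [Finite α] [Finite β]
    (φ : (L[[M]]).Formula (α ⊕ β)) (abar : β → M) (h : IsMA L M φ)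
    (θ₁ : (L[[M]]).Formula α)
    (hθ₁ : ∀ u : α → M, θ₁.Realize u ↔ ∃ w : β → M, φ.Realize (Sum.elim u w))
    (θ₂ : (L[[M]]).Formula α)
    (hθ₂ : ∀ u : α → M, θ₂.Realize u ↔ φ.Realize (Sum.elim u abar)) :
    IsMA L M θ₁ ∧ IsMA L M θ₂ := by
  classical
  obtain ⟨N, hN⟩ := h
  constructor
  · -- θ₁
    refine ⟨N, fun s hs hsc v => ?_⟩
    haveI : Nonempty M := ⟨v ⟨hsc.choose, hsc.choose_spec⟩⟩
    set s' : Set (α ⊕ β) := Sum.inl '' s ∪ Set.range Sum.inr with hs'def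
    have hs' : s'.Nonempty := ⟨Sum.inl hs.choose, Or.inl ⟨hs.choose, hs.choose_spec, rfl⟩⟩
    have hsc' : s'ᶜ.Nonempty := ⟨Sum.inl hsc.choose, by
      simp only [hs'def, Set.mem_compl_iff, Set.mem_union, Set.mem_image, Set.mem_range]
      push_neg
      exact ⟨fun x hx he => hsc.choose_spec (Sum.inl.inj he ▸ hx), fun x he => Sum.inr_ne_inl he⟩⟩
    set v' : ↥s'ᶜ → M := fun z =>
      Sum.elim (fun a => if ha : a ∉ s then v ⟨a, ha⟩ else Classical.arbitrary M)
        (fun _ => Classical.arbitrary M) z.1 with hv'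
    set W : (↥s → M) → (β → M) := fun u =>
      if h : ∃ w : β → M, φ.Realize (Sum.elim (combine s u v) w) then h.choose
      else fun _ => Classical.arbitrary M with hW
    set f : (↥s → M) → (↥s' → M) := fun u z => Sum.elim (combine s u v) (W u) z.1 with hf
    have key : ∀ u : ↥s → M, combine s' (f u) v' = Sum.elim (combine s u v) (W u) := by
      intro u
      funext z
      by_cases hz : z ∈ s'
      · simp [combine, hz, hf]
      · rcases z with a | b
        · have ha : a ∉ s := fun h' => hz (Or.inl ⟨a, h', rfl⟩)
          simp [combine, hz, hv', ha]
        · exact absurd (Or.inr ⟨b, rfl⟩) hz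
    have := hN s' hs' hsc' v'
    refine le_trans (Set.encard_le_encard_of_injOn (f := f) ?_ ?_) this
    · intro u hu
      have hu' := (hθ₁ (combine s u v)).1 hu
      have hWu : φ.Realize (Sum.elim (combine s u v) (W u)) := by
        rw [hW]
        simp only [hu', dif_pos]
        exact hu'.choose_spec
      show φ.Realize (combine s' (f u) v')
      rw [key u]
      exact hWu
    · intro u₁ _ u₂ _ hfe
      funext a
      have := congrFun hfe ⟨Sum.inl a, Or.inl ⟨a, a.2, rfl⟩⟩
      simpa [hf, combine, a.2] using this
  · -- θ₂
    refine ⟨N, fun s hs hsc v => ?_⟩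
    haveI : Nonempty M := ⟨v ⟨hsc.choose, hsc.choose_spec⟩⟩
    set s' : Set (α ⊕ β) := Sum.inl '' s with hs'def
    have hs' : s'.Nonempty := ⟨Sum.inl hs.choose, ⟨hs.choose, hs.choose_spec, rfl⟩⟩
    have hsc' : s'ᶜ.Nonempty := ⟨Sum.inl hsc.choose, by
      simp only [hs'def, Set.mem_compl_iff, Set.mem_image]
      push_neg
      exact fun x hx he => hsc.choose_spec (Sum.inl.inj he ▸ hx)⟩
    set v' : ↥s'ᶜ → M := fun z =>
      Sum.elim (fun a => if ha : a ∉ s then v ⟨a, ha⟩ else Classical.arbitrary M) abar z.1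
      with hv'
    set f : (↥s → M) → (↥s' → M) := fun u z => Sum.elim (combine s u v) abar z.1 with hf
    have key : ∀ u : ↥s → M, combine s' (f u) v' = Sum.elim (combine s u v) abar := by
      intro u
      funext z
      by_cases hz : z ∈ s'
      · simp [combine, hz, hf]
      · rcases z with a | b
        · have ha : a ∉ s := fun h' => hz ⟨a, h', rfl⟩
          simp [combine, hz, hv', ha]
        · simp [combine, hz, hv']
    have := hN s' hs' hsc' v'
    refine le_trans (Set.encard_le_encard_of_injOn (f := f) ?_ ?_) this
    · intro u hu
      have hu' := (hθ₂ (combine s u v)).1 hu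
      show φ.Realize (combine s' (f u) v')
      rw [key u]
      exact hu'
    · intro u₁ _ u₂ _ hfe
      funext a
      have := congrFun hfe ⟨Sum.inl a, ⟨a, a.2, rfl⟩⟩
      simpa [hf, combine, a.2] using this
end

section
/- Let k ≥ 1 and let φ_i(z̄_i), for i < k, be mutually algebraic L(M)-formulas such that the intersection ⋂_{i<k} range(z̄_i) of their variable sets is nonempty. Then the conjunction ψ(w̄) := ⋀_{i<k} φ_i(z̄_i), with range(w̄) = ⋃_{i<k} range(z̄_i), is mutually algebraic. -/
open FirstOrder Language Set

lemma myEncard_pi_le {ι : Type*} [Fintype ι] {T : ι → Type*} (S : ∀ i, Set (T i)) (n : ι → ℕ)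
    (h : ∀ i, (S i).encard ≤ n i) : (Set.pi Set.univ S).encard ≤ (∏ i, n i : ℕ) := by
  have hfin : ∀ i, (S i).Finite := fun i =>
    (Set.encard_le_coe_iff_finite_ncard_le.1 (h i)).1
  haveI : ∀ i, Finite (S i) := fun i => (hfin i).to_subtype
  haveI : Finite (Set.pi Set.univ S) := Finite.of_equiv _ (Equiv.Set.univPi S).symm
  rw [Set.encard_le_coe_iff_finite_ncard_le]
  refine ⟨Set.finite_coe_iff.mp inferInstance, ?_⟩
  have h1 : (Set.pi Set.univ S).ncard = ∏ i, (S i).ncard := by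
    rw [← Nat.card_coe_set_eq, Nat.card_congr (Equiv.Set.univPi S), Nat.card_pi]
    exact Finset.prod_congr rfl fun i _ => Nat.card_coe_set_eq (S i)
  rw [h1]
  exact Finset.prod_le_prod' fun i _ =>
    (Set.encard_le_coe_iff_finite_ncard_le.1 (h i)).2

lemma myCount_le {X : Type*} {ι : Type*} [Fintype ι] {T : ι → Type*} (proj : ∀ i, X → T i)
    (A : Set X) (S : ∀ i, Set (T i)) (n : ι → ℕ)
    (hmem : ∀ u ∈ A, ∀ i, proj i u ∈ S i)
    (hinj : ∀ u ∈ A, ∀ u' ∈ A, (∀ i, proj i u = proj i u') → u = u')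
    (hS : ∀ i, (S i).encard ≤ n i) : A.encard ≤ (∏ i, n i : ℕ) := by
  have hIO : Set.InjOn (fun u => fun i => proj i u) A := by
    intro u hu u' hu' he
    exact hinj u hu u' hu' fun i => congrFun he i
  calc A.encard = ((fun u => fun i => proj i u) '' A).encard := hIO.encard_image.symm
    _ ≤ (Set.pi Set.univ S).encard := by
        apply Set.encard_le_encard
        rintro _ ⟨u, hu, rfl⟩ i _
        exact hmem u hu i
    _ ≤ _ := myEncard_pi_le S n hS

lemma myEncard_biUnion_le {X Y : Type*} {C : Set Y} (f : Y → Set X) (m : ℕ∞) (hC : C.Finite)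
    (hf : ∀ c ∈ C, (f c).encard ≤ m) : (⋃ c ∈ C, f c).encard ≤ C.encard * m := by
  revert hf
  refine Set.Finite.induction_on (motive := fun C _ =>
      (∀ c ∈ C, (f c).encard ≤ m) → (⋃ c ∈ C, f c).encard ≤ C.encard * m) C hC (by simp) ?_
  intro a s ha hs ih hf
  rw [Set.biUnion_insert, Set.encard_insert_of_notMem ha]
  calc (f a ∪ ⋃ c ∈ s, f c).encard ≤ (f a).encard + (⋃ c ∈ s, f c).encard :=
        Set.encard_union_le _ _
    _ ≤ m + s.encard * m := add_le_add (hf a (Set.mem_insert a s))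
        (ih fun c hc => hf c (Set.mem_insert_of_mem a hc))
    _ = (s.encard + 1) * m := by ring

/-- A conjunction of mutually algebraic formulas whose variable sets have a
common variable, and which jointly cover all the variables, is mutually algebraic. -/
theorem stmt3 (L : Language) (M : Type) [L.Structure M] {α : Type} [Finite α]
    (k : ℕ) (hk : 1 ≤ k) (s : Fin k → Set α)
    (φ : ∀ i : Fin k, (L[[M]]).Formula ↥(s i)) (hMA : ∀ i, IsMA L M (φ i))
    (hint : (⋂ i, s i).Nonempty) (hcov : (⋃ i, s i) = Set.univ)
    (ψ : (L[[M]]).Formula α)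
    (hψ : ∀ v : α → M, ψ.Realize v ↔ ∀ i, (φ i).Realize (fun a : ↥(s i) => v ↑a)) :
    IsMA L M ψ := by
  classical
  obtain ⟨a₀, ha₀'⟩ := hint
  have ha₀ : ∀ i, a₀ ∈ s i := fun i => Set.mem_iInter.1 ha₀' i
  choose N hN using hMA
  set n : Fin k → ℕ := fun i => max (N i) 1 with hn
  have hn1 : ∀ i, 1 ≤ n i := fun i => le_max_right _ _
  have hNn : ∀ i, (N i : ℕ∞) ≤ (n i : ℕ) := fun i => Nat.cast_le.2 (le_max_left _ _)
  have hprod1 : 1 ≤ ∏ i, n i := Finset.one_le_prod' fun i _ => hn1 i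
  refine ⟨(∏ i, n i) * (∏ i, n i), ?_⟩
  intro t ht htc v
  haveI : Nonempty M := ⟨v ⟨htc.choose, htc.choose_spec⟩⟩
  set A := {u : ↥t → M | ψ.Realize (combine t u v)} with hA
  set x : Set α := t \ {a₀} with hx
  have hxt : x ⊆ t := Set.diff_subset
  set σ : ∀ i : Fin k, Set ↥(s i) := fun i => {a : ↥(s i) | ↑a ∈ x} with hσ
  set W : M → α → M := fun c a => if a = a₀ then c else
    if h : a ∈ tᶜ then v ⟨a, h⟩ else Classical.arbitrary M with hW
  -- W agrees with `combine t u v` off x, when c is the a₀-value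
  have hWagree : ∀ (u : ↥t → M) (a : α), a ∉ x → W (combine t u v a₀) a = combine t u v a := by
    intro u a hax
    by_cases haa : a = a₀
    · subst haa; simp [hW]
    · have hat : a ∉ t := fun h => hax ⟨h, haa⟩
      simp only [hW, if_neg haa, combine]
      rw [dif_pos (show a ∈ tᶜ from hat), dif_neg hat]
  set proj : ∀ i, (↥t → M) → (↥(σ i) → M) := fun i u a => u ⟨↑↑a, a.2.1⟩ with hproj
  set S : M → ∀ i, Set (↥(σ i) → M) := fun c i =>
    if (σ i).Nonempty then
      {r | (φ i).Realize (combine (σ i) r (fun a : ↥(σ i)ᶜ => W c ↑↑a))}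
    else Set.univ with hS
  -- agreement lemma for membership
  have hagree2 : ∀ (u : ↥t → M) (i : Fin k),
      combine (σ i) (proj i u) (fun a : ↥(σ i)ᶜ => W (combine t u v a₀) ↑↑a)
        = fun a : ↥(s i) => combine t u v ↑a := by
    intro u i
    funext a
    by_cases h : a ∈ σ i
    · simp only [combine]
      rw [dif_pos h, dif_pos (hxt h)]
    · have h1 : combine (σ i) (proj i u) (fun a : ↥(σ i)ᶜ => W (combine t u v a₀) ↑↑a) a
          = W (combine t u v a₀) ↑a := by
        simp only [combine]; rw [dif_neg h]
      rw [h1, hWagree u ↑a h]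
  have hSbound : ∀ c i, (S c i).encard ≤ (n i : ℕ) := by
    intro c i
    by_cases hne : (σ i).Nonempty
    · rw [hS]; simp only [if_pos hne]
      have hcne : (σ i)ᶜ.Nonempty :=
        ⟨⟨a₀, ha₀ i⟩, fun h => (h : a₀ ∈ x).2 rfl⟩
      exact (hN i (σ i) hne hcne _).trans (hNn i)
    · rw [hS]; simp only [if_neg hne]
      refine le_trans (Set.encard_le_one_iff.2 ?_) (by exact_mod_cast Nat.one_le_cast.2 (hn1 i))
      intro f g _ _
      funext a
      exact absurd ⟨a.1, a.2⟩ hne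
  have hmem : ∀ u ∈ A, ∀ i, proj i u ∈ S (combine t u v a₀) i := by
    intro u hu i
    by_cases hne : (σ i).Nonempty
    · rw [hS]; simp only [if_pos hne, Set.mem_setOf_eq]
      rw [hagree2 u i]
      exact (hψ (combine t u v)).1 hu i
    · rw [hS]; simp only [if_neg hne]; exact Set.mem_univ _
  -- injectivity on a fiber
  have hinj : ∀ c : M, ∀ u ∈ A, ∀ u' ∈ A, combine t u v a₀ = c → combine t u' v a₀ = c →
      (∀ i, proj i u = proj i u') → u = u' := by
    intro c u _ u' _ hc hc' hpe
    funext b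
    have hbv : ∀ (w : ↥t → M), combine t w v ↑b = w b := by
      intro w; simp only [combine]; rw [dif_pos b.2]
    by_cases hb : (b : α) = a₀
    · have h1 : u b = c := by rw [← hbv u, hb, hc]
      have h2 : u' b = c := by rw [← hbv u', hb, hc']
      rw [h1, h2]
    · have hbx : (b : α) ∈ x := ⟨b.2, hb⟩
      have hbu : (b : α) ∈ ⋃ i, s i := by rw [hcov]; exact Set.mem_univ _
      obtain ⟨_, ⟨i, rfl⟩, hbi⟩ := hbu
      exact congrFun (hpe i) ⟨⟨↑b, hbi⟩, hbx⟩
  -- fiber bound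
  have hfiber : ∀ c : M,
      {u : ↥t → M | u ∈ A ∧ combine t u v a₀ = c}.encard ≤ ((∏ i, n i : ℕ) : ℕ∞) := by
    intro c
    refine myCount_le proj _ (S c) n ?_ ?_ (hSbound c)
    · intro u hu i
      have := hmem u hu.1 i
      rwa [hu.2] at this
    · intro u hu u' hu' hpe
      exact hinj c u hu.1 u' hu'.1 hu.2 hu'.2 hpe
  set C := (fun u : ↥t → M => combine t u v a₀) '' A with hC
  have hCcard : C.encard ≤ ((∏ i, n i : ℕ) : ℕ∞) := by
    by_cases h : a₀ ∈ t
    · obtain ⟨b, hb⟩ := htc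
      have hbu : b ∈ ⋃ i, s i := by rw [hcov]; exact Set.mem_univ _
      obtain ⟨_, ⟨j, rfl⟩, hbj⟩ := hbu
      set σ' : Set ↥(s j) := {a : ↥(s j) | ↑a ∈ t} with hσ'
      have hne : σ'.Nonempty := ⟨⟨a₀, ha₀ j⟩, h⟩
      have hcne : σ'ᶜ.Nonempty := ⟨⟨b, hbj⟩, fun hh => hb hh⟩
      set v' : ↥σ'ᶜ → M := fun a => v ⟨↑↑a, a.2⟩ with hv'
      have hR := hN j σ' hne hcne v'
      have hsub : C ⊆ (fun r : ↥σ' → M => r ⟨⟨a₀, ha₀ j⟩, h⟩) ''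
          {r : ↥σ' → M | (φ j).Realize (combine σ' r v')} := by
        rintro _ ⟨u, hu, rfl⟩
        refine ⟨fun a => u ⟨↑↑a, a.2⟩, ?_, ?_⟩
        · have heq : combine σ' (fun a : ↥σ' => u ⟨↑↑a, a.2⟩) v'
              = fun a : ↥(s j) => combine t u v ↑a := by
            funext a
            by_cases ha : a ∈ σ'
            · simp only [combine]
              rw [dif_pos (show (↑a : α) ∈ t from ha), dif_pos ha]
            · simp only [combine]
              rw [dif_neg (show ¬ (↑a : α) ∈ t from ha), dif_neg ha]
          rw [Set.mem_setOf_eq, heq]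
          exact (hψ (combine t u v)).1 hu j
        · simp only [combine]; rw [dif_pos h]
      calc C.encard ≤ _ := Set.encard_le_encard hsub
        _ ≤ _ := Set.encard_image_le _ _
        _ ≤ (N j : ℕ∞) := hR
        _ ≤ (n j : ℕ∞) := hNn j
        _ ≤ _ := Nat.cast_le.2 (Finset.single_le_prod' (fun i _ => hn1 i) (Finset.mem_univ j))
    · have hsub : C ⊆ {v ⟨a₀, h⟩} := by
        rintro _ ⟨u, _, rfl⟩
        simp only [combine, Set.mem_singleton_iff]
        rw [dif_neg h]
      calc C.encard ≤ ({v ⟨a₀, h⟩} : Set M).encard := Set.encard_le_encard hsub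
        _ = 1 := Set.encard_singleton _
        _ ≤ _ := by exact_mod_cast Nat.one_le_cast.2 hprod1
  have hCfin : C.Finite := (Set.encard_le_coe_iff.1 hCcard).1
  have hAsub : A ⊆ ⋃ c ∈ C, {u : ↥t → M | u ∈ A ∧ combine t u v a₀ = c} := by
    intro u hu
    exact Set.mem_biUnion ⟨u, hu, rfl⟩ ⟨hu, rfl⟩
  calc A.encard ≤ _ := Set.encard_le_encard hAsub
    _ ≤ C.encard * ((∏ i, n i : ℕ) : ℕ∞) :=
        myEncard_biUnion_le _ _ hCfin fun c _ => hfiber c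
    _ ≤ ((∏ i, n i : ℕ) : ℕ∞) * ((∏ i, n i : ℕ) : ℕ∞) := mul_le_mul' hCcard le_rfl
    _ = (((∏ i, n i) * (∏ i, n i) : ℕ) : ℕ∞) := (Nat.cast_mul _ _).symm
end

section
/- Let M be an L-structure and let 𝒫 be the set of L(M)-formulas equivalent modulo the elementary diagram T(M) to a positive Boolean combination of preferred formulas. Then every formula in 𝒫 is T(M)-equivalent to an existential formula ∃x̄ ψ(x̄,ȳ) with ψ quantifier-free such that for some K ∈ ℕ, T(M) ⊨ ∀ȳ ∃^{<K} x̄ ψ(x̄,ȳ). -/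
open FirstOrder Language Set

lemma ENat.card_prod' (X : Type*) (Y : Type*) :
    ENat.card (X × Y) = ENat.card X * ENat.card Y := by
  simp only [ENat.card, Cardinal.mk_prod, map_mul, Cardinal.toENat_lift]

lemma Set.encard_prod' {X Y : Type*} (A : Set X) (B : Set Y) :
    (A ×ˢ B).encard = A.encard * B.encard := by
  rw [Set.encard, Set.encard, Set.encard, ← ENat.card_prod']
  exact ENat.card_congr (Equiv.Set.prod A B)

lemma exists_inj_fin {X : Type*} {S : Set X} {k : ℕ} (h : (k : ℕ∞) ≤ S.encard) :
    ∃ f : Fin k → X, Function.Injective f ∧ ∀ j, f j ∈ S := by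
  obtain ⟨t, htS, ht⟩ := Set.exists_subset_encard_eq h
  have htf : t.Finite := Set.finite_of_encard_eq_coe ht
  haveI := htf.fintype
  have hc : Fintype.card t = k := by
    rw [Set.encard_eq_coe_toFinset_card, Set.toFinset_card] at ht
    exact_mod_cast ht
  let e := Fintype.equivFinOfCardEq hc
  exact ⟨fun j => (e.symm j : X), Subtype.coe_injective.comp e.symm.injective,
    fun j => htS (e.symm j).2⟩

lemma le_encard_of_inj {X : Type*} {S : Set X} {k : ℕ} (f : Fin k → X)
    (hf : Function.Injective f) (hS : ∀ j, f j ∈ S) : (k : ℕ∞) ≤ S.encard := by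
  have h1 : (Set.range f).encard = k := by
    rw [← Set.image_univ, hf.encard_image, Set.encard_univ, ENat.card_eq_coe_fintype_card,
      Fintype.card_fin]
  rw [← h1]
  exact Set.encard_le_encard (Set.range_subset_iff.2 hS)

lemma transfer (L : Language) (M : Type) [L.Structure M] {β : Type} [Finite β]
    {n K : ℕ} (R : (L[[M]]).Formula (Fin n ⊕ β))
    (hM : ∀ v : β → M, {u : Fin n → M | R.Realize (Sum.elim u v)}.encard ≤ (K : ℕ∞))
    (N : Type) [(L[[M]]).Structure N] (hN : N ⊨ L.elementaryDiagram M) (v : β → N) :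
    {u : Fin n → N | R.Realize (Sum.elim u v)}.encard ≤ (K : ℕ∞) := by
  classical
  let g : Fin (K+1) → (Fin n ⊕ β) → β ⊕ (Fin (K+1) × Fin n) :=
    fun j => Sum.elim (fun k => Sum.inr (j, k)) Sum.inl
  let χ : (L[[M]]).Formula (β ⊕ (Fin (K+1) × Fin n)) :=
    (BoundedFormula.iInf (fun j : Fin (K+1) => (R.relabel (g j) : (L[[M]]).Formula _))) ⊓
    (BoundedFormula.iInf (fun p : Fin (K+1) × Fin (K+1) =>
      if p.1 = p.2 then ⊤ else
        BoundedFormula.iSup (fun k : Fin n =>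
          (Term.equal (Term.var (Sum.inr (p.1, k) : β ⊕ (Fin (K+1) × Fin n)))
            (Term.var (Sum.inr (p.2, k)))).not)))
  have hχ : ∀ (P : Type) (SP : (L[[M]]).Structure P) (w : β → P) (i : Fin (K+1) × Fin n → P),
      χ.Realize (Sum.elim w i) ↔
        ((∀ j, R.Realize (Sum.elim (fun k => i (j, k)) w)) ∧
          ∀ j j', j ≠ j' → (fun k => i (j, k)) ≠ fun k => i (j', k)) := by
    intro P SP w i
    have comp_eq : ∀ j : Fin (K+1), (Sum.elim w i) ∘ (g j) = Sum.elim (fun k => i (j, k)) w := by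
      intro j; funext x; cases x <;> rfl
    constructor
    · intro hreal
      rw [Formula.realize_inf] at hreal
      obtain ⟨h1, h2⟩ := hreal
      constructor
      · intro j
        have := BoundedFormula.realize_iInf.1 h1 j
        rw [show (BoundedFormula.Realize (R.relabel (g j)) (Sum.elim w i) default) =
          Formula.Realize (R.relabel (g j)) (Sum.elim w i) from rfl,
          Formula.realize_relabel, comp_eq] at this
        exact this
      · intro j j' hjj' heq
        have := BoundedFormula.realize_iInf.1 h2 (j, j')
        rw [if_neg hjj'] at this
        obtain ⟨k, hk⟩ := BoundedFormula.realize_iSup.1 this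
        rw [BoundedFormula.realize_not] at hk
        apply hk
        have : i (j, k) = i (j', k) := congrFun heq k
        simpa [Term.realize, Formula.Realize, Term.equal] using this
    · rintro ⟨h1, h2⟩
      rw [Formula.realize_inf]
      constructor
      · refine BoundedFormula.realize_iInf.2 ?_
        intro j
        rw [show (BoundedFormula.Realize (R.relabel (g j)) (Sum.elim w i) default) =
          Formula.Realize (R.relabel (g j)) (Sum.elim w i) from rfl,
          Formula.realize_relabel, comp_eq]
        exact h1 j
      · refine BoundedFormula.realize_iInf.2 ?_
        rintro ⟨j, j'⟩
        by_cases hjj' : j = j'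
        · rw [if_pos hjj']; exact (BoundedFormula.realize_top).2 trivial
        · rw [if_neg hjj']
          have hne := h2 j j' hjj'
          have : ∃ k, i (j, k) ≠ i (j', k) := by
            by_contra hcon
            push_neg at hcon
            exact hne (funext hcon)
          obtain ⟨k, hk⟩ := this
          refine BoundedFormula.realize_iSup.2 ⟨k, ?_⟩
          rw [BoundedFormula.realize_not]
          intro hcon
          apply hk
          simpa [Term.realize, Formula.Realize, Term.equal] using hcon
  let E : (L[[M]]).Formula β := Formula.iExs (Fin (K+1) × Fin n) χ
  let σ : (L[[M]]).Sentence := Formula.iAlls β (E.not.relabel (fun b : β => (Sum.inr b : Empty ⊕ β)))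
  have hE : ∀ (P : Type) (SP : (L[[M]]).Structure P) (w : β → P),
      E.Realize w ↔ ∃ i : Fin (K+1) × Fin n → P, χ.Realize (Sum.elim w i) := by
    intro P SP w
    rw [Formula.realize_iExs]
  have hσ : ∀ (P : Type) (SP : (L[[M]]).Structure P),
      σ.Realize P ↔ ∀ w : β → P, ¬ E.Realize w := by
    intro P SP
    rw [Sentence.Realize, Formula.realize_iAlls]
    refine forall_congr' fun w => ?_
    simp only [Formula.realize_relabel, Function.comp_def, Formula.realize_not, Sum.elim_inr]
  have hMσ : M ⊨ σ := by
    rw [hσ]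
    intro w hEw
    obtain ⟨i, hi⟩ := (hE M _ w).1 hEw
    rw [hχ M _ w i] at hi
    obtain ⟨h1, h2⟩ := hi
    have hinj : Function.Injective (fun j : Fin (K+1) => (fun k => i (j, k))) := by
      intro j j' hjj'
      by_contra hne
      exact h2 j j' hne hjj'
    have hK1 : ((K+1 : ℕ) : ℕ∞) ≤ {u : Fin n → M | R.Realize (Sum.elim u w)}.encard :=
      le_encard_of_inj _ hinj (fun j => h1 j)
    have := hK1.trans (hM w)
    rw [Nat.cast_le] at this
    omega
  have hNσ : N ⊨ σ := by
    have := hN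
    exact (L.elementaryDiagram M).realize_sentence_of_mem
      (mem_completeTheory.2 hMσ)
  by_contra hcon
  push_neg at hcon
  have hK1 : ((K+1 : ℕ) : ℕ∞) ≤ {u : Fin n → N | R.Realize (Sum.elim u v)}.encard := by
    rw [Nat.cast_add, Nat.cast_one]
    exact Order.add_one_le_of_lt hcon
  obtain ⟨f, hfinj, hfS⟩ := exists_inj_fin hK1
  refine (hσ N _).1 hNσ v ?_
  rw [hE N _ v]
  exact ⟨fun p => f p.1 p.2, (hχ N _ v (fun p => f p.1 p.2)).2
    ⟨fun j => hfS j, fun j j' hjj' heq => hjj' (hfinj (heq))⟩⟩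

lemma encard_le_mul {X Y Z : Type*} {S : Set Z} {A : Set X} {B : Set Y} {a b : ℕ}
    (f : Z → X × Y) (hf : Function.Injective f)
    (hsub : ∀ z ∈ S, (f z).1 ∈ A ∧ (f z).2 ∈ B)
    (hA : A.encard ≤ a) (hB : B.encard ≤ b) : S.encard ≤ ((a * b : ℕ) : ℕ∞) := by
  rw [← hf.encard_image S]
  refine (Set.encard_le_encard (t := A ×ˢ B) ?_).trans ?_
  · rintro y ⟨z, hz, rfl⟩
    exact ⟨(hsub z hz).1, (hsub z hz).2⟩
  · rw [Set.encard_prod']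
    push_cast
    exact mul_le_mul' hA hB

lemma split_inj {N : Type*} {n₁ n₂ : ℕ} :
    Function.Injective (fun w : Fin (n₁ + n₂) → N =>
      ((fun k => w (Fin.castAdd n₂ k), fun k => w (Fin.natAdd n₁ k)) :
        (Fin n₁ → N) × (Fin n₂ → N))) := by
  intro w w' h
  have h1 := congrArg Prod.fst h
  have h2 := congrArg Prod.snd h
  funext j
  refine Fin.addCases (fun k => ?_) (fun k => ?_) j
  · exact congrFun h1 k
  · exact congrFun h2 k

lemma relabel_elim_realize {L' : Language} {γ δ α N : Type*} [L'.Structure N]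
    (φ : L'.Formula (γ ⊕ α)) (f : γ → δ) (w : δ → N) (v : α → N) :
    (φ.relabel (Sum.map f id)).Realize (Sum.elim w v) ↔
      φ.Realize (Sum.elim (fun k => w (f k)) v) := by
  rw [Formula.realize_relabel]
  have : Sum.elim w v ∘ Sum.map f id = Sum.elim (fun k => w (f k)) v := by
    funext x; cases x <;> rfl
  rw [this]

lemma IsPED.isQF {L' : Language} {α : Type} {φ : L'.Formula α} (h : IsPED φ) :
    BoundedFormula.IsQF φ := by
  induction h with
  | eq a b => exact (BoundedFormula.IsAtomic.equal _ _).isQF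
  | not _ ih => exact ih.not
  | inf _ _ ih1 ih2 => exact ih1.inf ih2
  | sup _ _ ih1 ih2 => exact ih1.sup ih2

lemma isQF_iInf {L' : Language} {α β : Type*} [Finite β] {f : β → L'.BoundedFormula α 0}
    (h : ∀ b, (f b).IsQF) : (BoundedFormula.iInf f).IsQF := by
  have key : ∀ l : List (L'.BoundedFormula α 0), (∀ φ ∈ l, φ.IsQF) →
      (l.foldr (· ⊓ ·) ⊤).IsQF := by
    intro l
    induction l with
    | nil => exact fun _ => BoundedFormula.IsQF.top
    | cons a t ih =>
      intro hl
      exact (hl a (List.mem_cons_self)).inf (ih fun φ hφ => hl φ (List.mem_cons_of_mem _ hφ))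
  apply key
  intro φ hφ
  obtain ⟨b, -, rfl⟩ := List.mem_map.1 hφ
  exact h b

lemma good_of_preferred (L : Language) (M : Type) [L.Structure M] {α : Type} [Finite α]
    {θ : (L[[M]]).Formula α} (h : IsPreferred L M θ)
    (transfer : ∀ {β : Type} [Finite β] {n K : ℕ} (R : (L[[M]]).Formula (Fin n ⊕ β)),
      (∀ v : β → M, {u : Fin n → M | R.Realize (Sum.elim u v)}.encard ≤ (K : ℕ∞)) →
      ∀ (N : Type) [(L[[M]]).Structure N], N ⊨ L.elementaryDiagram M → ∀ v : β → N,
        {u : Fin n → N | R.Realize (Sum.elim u v)}.encard ≤ (K : ℕ∞)) :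
    ∃ (n : ℕ) (ψ : (L[[M]]).Formula (Fin n ⊕ α)) (K : ℕ), ψ.IsQF ∧
      ∀ (N : Type) [(L[[M]]).Structure N], N ⊨ L.elementaryDiagram M →
        ∀ v : α → N,
          {u : Fin n → N | ψ.Realize (Sum.elim u v)}.encard ≤ (K : ℕ∞) ∧
          (θ.Realize v ↔ ∃ u : Fin n → N, ψ.Realize (Sum.elim u v)) := by
  classical
  obtain ⟨s, n, R, S, hs, hRQF, hMA, hSPED, hiff⟩ := h
  obtain ⟨NR, hNR⟩ := hMA
  haveI : Finite ↥s := Subtype.finite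
  set ρ : Fin n ⊕ ↥s → Fin n ⊕ α := Sum.map id (fun a => (a : α)) with hρ
  refine ⟨n, (R.relabel ρ) ⊓ S, NR + 1, ?_, ?_⟩
  · exact (BoundedFormula.IsQF.relabel hRQF _).inf hSPED.isQF
  have hψreal : ∀ (P : Type) (SP : (L[[M]]).Structure P) (v : α → P) (u : Fin n → P),
      ((R.relabel ρ) ⊓ S).Realize (Sum.elim u v) ↔
        R.Realize (Sum.elim u (fun a : ↥s => v ↑a)) ∧ S.Realize (Sum.elim u v) := by
    intro P SP v u
    rw [Formula.realize_inf, Formula.realize_relabel]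
    have hcomp : (Sum.elim u v) ∘ ρ = Sum.elim u (fun a : ↥s => v ↑a) := by
      funext x; cases x <;> rfl
    rw [hcomp]
  -- the M-level bound for R
  have hbound : ∀ w : ↥s → M,
      {u : Fin n → M | R.Realize (Sum.elim u w)}.encard ≤ ((NR + 1 : ℕ) : ℕ∞) := by
    intro w
    cases n with
    | zero =>
      have h1 : {u : Fin 0 → M | R.Realize (Sum.elim u w)}.encard ≤ 1 :=
        Set.encard_le_one_iff.2 fun a b _ _ => funext fun i => i.elim0
      refine h1.trans ?_
      exact_mod_cast Nat.one_le_iff_ne_zero.2 (Nat.succ_ne_zero NR)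
    | succ m =>
      set s₀ : Set (Fin (m+1) ⊕ ↥s) := Set.range Sum.inl with hs₀
      have hne : s₀.Nonempty := ⟨Sum.inl 0, Set.mem_range_self 0⟩
      have hnec : s₀ᶜ.Nonempty := by
        refine ⟨Sum.inr ⟨hs.choose, hs.choose_spec⟩, ?_⟩
        rintro ⟨k, hk⟩
        exact Sum.inl_ne_inr hk
      set v' : ↥s₀ᶜ → M := fun x => Sum.elim (fun _ => w ⟨hs.choose, hs.choose_spec⟩) w x.1
        with hv'
      set e : Fin (m+1) ≃ ↥s₀ := Equiv.ofInjective Sum.inl Sum.inl_injective with he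
      have hcombine : ∀ u : Fin (m+1) → M,
          combine s₀ (fun x => u (e.symm x)) v' = Sum.elim u w := by
        intro u
        funext x
        cases x with
        | inl k =>
          have hmem : (Sum.inl k : Fin (m+1) ⊕ ↥s) ∈ s₀ := Set.mem_range_self k
          rw [combine, dif_pos hmem]
          have : e.symm ⟨Sum.inl k, hmem⟩ = k := by
            rw [Equiv.symm_apply_eq]
            rfl
          rw [Sum.elim_inl, this]
        | inr b =>
          have hmem : (Sum.inr b : Fin (m+1) ⊕ ↥s) ∉ s₀ := by
            rintro ⟨k, hk⟩; exact Sum.inl_ne_inr hk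
          rw [combine, dif_neg hmem]
          rfl
      have himg : {u : Fin (m+1) → M | R.Realize (Sum.elim u w)} =
          (fun u' : ↥s₀ → M => fun k => u' (e k)) ''
            {u' : ↥s₀ → M | R.Realize (combine s₀ u' v')} := by
        ext u
        constructor
        · intro hu
          refine ⟨fun x => u (e.symm x), ?_, ?_⟩
          · rw [Set.mem_setOf_eq, hcombine u]; exact hu
          · funext k; simp
        · rintro ⟨u', hu', rfl⟩
          rw [Set.mem_setOf_eq]
          have : Sum.elim (fun k => u' (e k)) w = combine s₀ u' v' := by
            rw [← hcombine fun k => u' (e k)]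
            funext x
            simp
          rw [this]
          exact hu'
      have hinj : Function.Injective (fun u' : ↥s₀ → M => fun k => u' (e k)) := by
        intro f g hfg
        funext x
        have := congrFun hfg (e.symm x)
        simpa using this
      rw [himg, hinj.encard_image]
      refine (hNR s₀ hne hnec v').trans ?_
      exact_mod_cast Nat.le_succ NR
  -- the N-level bound and equivalence
  intro N SN hN v
  constructor
  · have hsub : {u : Fin n → N | ((R.relabel ρ) ⊓ S).Realize (Sum.elim u v)} ⊆
        {u : Fin n → N | R.Realize (Sum.elim u (fun a : ↥s => v ↑a))} := by
      intro u hu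
      exact ((hψreal N SN v u).1 hu).1
    exact (Set.encard_le_encard hsub).trans (transfer R hbound N hN (fun a : ↥s => v ↑a))
  · rw [hiff N hN v]
    exact exists_congr fun u => (hψreal N SN v u).symm

def Good (L : Language) (M : Type) [L.Structure M] {α : Type} (θ : (L[[M]]).Formula α) : Prop :=
  ∃ (n : ℕ) (ψ : (L[[M]]).Formula (Fin n ⊕ α)) (K : ℕ), ψ.IsQF ∧
    ∀ (N : Type) [(L[[M]]).Structure N], N ⊨ L.elementaryDiagram M →
      ∀ v : α → N,
        {u : Fin n → N | ψ.Realize (Sum.elim u v)}.encard ≤ (K : ℕ∞) ∧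
        (θ.Realize v ↔ ∃ u : Fin n → N, ψ.Realize (Sum.elim u v))

lemma Good.inf' {L : Language} {M : Type} [L.Structure M] {α : Type}
    {θ₁ θ₂ : (L[[M]]).Formula α} (h1 : Good L M θ₁) (h2 : Good L M θ₂) :
    Good L M (θ₁ ⊓ θ₂) := by
  obtain ⟨n₁, ψ₁, K₁, hQF₁, hG1⟩ := h1
  obtain ⟨n₂, ψ₂, K₂, hQF₂, hG2⟩ := h2
  refine ⟨n₁ + n₂,
    (ψ₁.relabel (Sum.map (Fin.castAdd n₂) id)) ⊓ (ψ₂.relabel (Sum.map (Fin.natAdd n₁) id)),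
    K₁ * K₂, (BoundedFormula.IsQF.relabel hQF₁ _).inf (BoundedFormula.IsQF.relabel hQF₂ _), ?_⟩
  intro N SN hN v
  obtain ⟨hb1, he1⟩ := hG1 N hN v
  obtain ⟨hb2, he2⟩ := hG2 N hN v
  have hreal : ∀ w : Fin (n₁ + n₂) → N,
      (((ψ₁.relabel (Sum.map (Fin.castAdd n₂) id)) ⊓
        (ψ₂.relabel (Sum.map (Fin.natAdd n₁) id))).Realize (Sum.elim w v)) ↔
        (ψ₁.Realize (Sum.elim (fun k => w (Fin.castAdd n₂ k)) v) ∧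
         ψ₂.Realize (Sum.elim (fun k => w (Fin.natAdd n₁ k)) v)) := by
    intro w
    rw [Formula.realize_inf, relabel_elim_realize, relabel_elim_realize]
  constructor
  · exact encard_le_mul _ split_inj (fun w hw => (hreal w).1 hw) hb1 hb2
  · rw [Formula.realize_inf, he1, he2]
    constructor
    · rintro ⟨⟨u₁, hu₁⟩, ⟨u₂, hu₂⟩⟩
      refine ⟨Fin.addCases u₁ u₂, (hreal _).2 ⟨?_, ?_⟩⟩
      · have hca : (fun k => (Fin.addCases u₁ u₂ : Fin (n₁ + n₂) → N) (Fin.castAdd n₂ k)) = u₁ :=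
          funext fun k => Fin.addCases_left k
        rw [hca]; exact hu₁
      · have hna : (fun k => (Fin.addCases u₁ u₂ : Fin (n₁ + n₂) → N) (Fin.natAdd n₁ k)) = u₂ :=
          funext fun k => Fin.addCases_right k
        rw [hna]; exact hu₂
    · rintro ⟨w, hw⟩
      obtain ⟨hw1, hw2⟩ := (hreal w).1 hw
      exact ⟨⟨_, hw1⟩, ⟨_, hw2⟩⟩

lemma Good.sup' {L : Language} {M : Type} [L.Structure M] {α : Type} (a0 : α)
    {θ₁ θ₂ : (L[[M]]).Formula α} (h1 : Good L M θ₁) (h2 : Good L M θ₂) :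
    Good L M (θ₁ ⊔ θ₂) := by
  classical
  obtain ⟨n₁, ψ₁, K₁, hQF₁, hG1⟩ := h1
  obtain ⟨n₂, ψ₂, K₂, hQF₂, hG2⟩ := h2
  set ψ₁' : (L[[M]]).Formula (Fin (n₁ + n₂) ⊕ α) :=
    ψ₁.relabel (Sum.map (Fin.castAdd n₂) id) with hψ₁'
  set ψ₂' : (L[[M]]).Formula (Fin (n₁ + n₂) ⊕ α) :=
    ψ₂.relabel (Sum.map (Fin.natAdd n₁) id) with hψ₂'
  set pin₁ : (L[[M]]).Formula (Fin (n₁ + n₂) ⊕ α) :=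
    BoundedFormula.iInf (fun k : Fin n₁ =>
      Term.equal (Term.var (Sum.inl (Fin.castAdd n₂ k) : Fin (n₁ + n₂) ⊕ α))
        (Term.var (Sum.inr a0))) with hpin₁def
  set pin₂ : (L[[M]]).Formula (Fin (n₁ + n₂) ⊕ α) :=
    BoundedFormula.iInf (fun k : Fin n₂ =>
      Term.equal (Term.var (Sum.inl (Fin.natAdd n₁ k) : Fin (n₁ + n₂) ⊕ α))
        (Term.var (Sum.inr a0))) with hpin₂def
  have hpinQF₁ : pin₁.IsQF := isQF_iInf fun k => (BoundedFormula.IsAtomic.equal _ _).isQF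
  have hpinQF₂ : pin₂.IsQF := isQF_iInf fun k => (BoundedFormula.IsAtomic.equal _ _).isQF
  refine ⟨n₁ + n₂, (ψ₁' ⊓ ψ₂') ⊔ ((ψ₁' ⊓ pin₂) ⊔ (ψ₂' ⊓ pin₁)), (K₁ + 1) * (K₂ + 1),
    ((BoundedFormula.IsQF.relabel hQF₁ _).inf (BoundedFormula.IsQF.relabel hQF₂ _)).sup
      (((BoundedFormula.IsQF.relabel hQF₁ _).inf hpinQF₂).sup
        ((BoundedFormula.IsQF.relabel hQF₂ _).inf hpinQF₁)), ?_⟩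
  intro N SN hN v
  obtain ⟨hb1, he1⟩ := hG1 N hN v
  obtain ⟨hb2, he2⟩ := hG2 N hN v
  have hpin1 : ∀ w : Fin (n₁ + n₂) → N,
      pin₁.Realize (Sum.elim w v) ↔ ∀ k, w (Fin.castAdd n₂ k) = v a0 := by
    intro w
    constructor
    · intro hp k
      have := BoundedFormula.realize_iInf.1 hp k
      have h2 : Formula.Realize (Term.equal
        (Term.var (Sum.inl (Fin.castAdd n₂ k) : Fin (n₁ + n₂) ⊕ α))
        (Term.var (Sum.inr a0))) (Sum.elim w v) := this
      rw [Formula.realize_equal] at h2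
      simpa using h2
    · intro hp
      refine BoundedFormula.realize_iInf.2 fun k => ?_
      show Formula.Realize (Term.equal
        (Term.var (Sum.inl (Fin.castAdd n₂ k) : Fin (n₁ + n₂) ⊕ α))
        (Term.var (Sum.inr a0))) (Sum.elim w v)
      rw [Formula.realize_equal]
      simpa using hp k
  have hpin2 : ∀ w : Fin (n₁ + n₂) → N,
      pin₂.Realize (Sum.elim w v) ↔ ∀ k, w (Fin.natAdd n₁ k) = v a0 := by
    intro w
    constructor
    · intro hp k
      have := BoundedFormula.realize_iInf.1 hp k
      have h2 : Formula.Realize (Term.equal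
        (Term.var (Sum.inl (Fin.natAdd n₁ k) : Fin (n₁ + n₂) ⊕ α))
        (Term.var (Sum.inr a0))) (Sum.elim w v) := this
      rw [Formula.realize_equal] at h2
      simpa using h2
    · intro hp
      refine BoundedFormula.realize_iInf.2 fun k => ?_
      show Formula.Realize (Term.equal
        (Term.var (Sum.inl (Fin.natAdd n₁ k) : Fin (n₁ + n₂) ⊕ α))
        (Term.var (Sum.inr a0))) (Sum.elim w v)
      rw [Formula.realize_equal]
      simpa using hp k
  have hreal : ∀ w : Fin (n₁ + n₂) → N,
      (((ψ₁' ⊓ ψ₂') ⊔ ((ψ₁' ⊓ pin₂) ⊔ (ψ₂' ⊓ pin₁))).Realize (Sum.elim w v)) ↔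
        ((ψ₁.Realize (Sum.elim (fun k => w (Fin.castAdd n₂ k)) v) ∧
          ψ₂.Realize (Sum.elim (fun k => w (Fin.natAdd n₁ k)) v)) ∨
         ((ψ₁.Realize (Sum.elim (fun k => w (Fin.castAdd n₂ k)) v) ∧
           ∀ k, w (Fin.natAdd n₁ k) = v a0) ∨
          (ψ₂.Realize (Sum.elim (fun k => w (Fin.natAdd n₁ k)) v) ∧
           ∀ k, w (Fin.castAdd n₂ k) = v a0))) := by
    intro w
    rw [Formula.realize_sup, Formula.realize_sup, Formula.realize_inf, Formula.realize_inf,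
      Formula.realize_inf, hψ₁', hψ₂', relabel_elim_realize, relabel_elim_realize,
      hpin1 w, hpin2 w]
  constructor
  · refine encard_le_mul (a := K₁ + 1) (b := K₂ + 1) _ split_inj (fun w hw => ?_)
      (A := insert (fun _ => v a0) {u₁ : Fin n₁ → N | ψ₁.Realize (Sum.elim u₁ v)})
      (B := insert (fun _ => v a0) {u₂ : Fin n₂ → N | ψ₂.Realize (Sum.elim u₂ v)})
      ?_ ?_
    · rcases (hreal w).1 hw with ⟨hw1, hw2⟩ | ⟨hw1, hw2⟩ | ⟨hw1, hw2⟩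
      · exact ⟨Set.mem_insert_of_mem _ hw1, Set.mem_insert_of_mem _ hw2⟩
      · refine ⟨Set.mem_insert_of_mem _ hw1, ?_⟩
        have : (fun k => w (Fin.natAdd n₁ k)) = fun _ => v a0 := funext hw2
        rw [show ((fun k => w (Fin.castAdd n₂ k), fun k => w (Fin.natAdd n₁ k)) :
          (Fin n₁ → N) × (Fin n₂ → N)).2 = fun k => w (Fin.natAdd n₁ k) from rfl, this]
        exact Set.mem_insert _ _
      · refine ⟨?_, Set.mem_insert_of_mem _ hw1⟩
        have : (fun k => w (Fin.castAdd n₂ k)) = fun _ => v a0 := funext hw2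
        rw [show ((fun k => w (Fin.castAdd n₂ k), fun k => w (Fin.natAdd n₁ k)) :
          (Fin n₁ → N) × (Fin n₂ → N)).1 = fun k => w (Fin.castAdd n₂ k) from rfl, this]
        exact Set.mem_insert _ _
    · refine (Set.encard_insert_le _ _).trans ?_
      rw [Nat.cast_add, Nat.cast_one]
      exact add_le_add_left hb1 1
    · refine (Set.encard_insert_le _ _).trans ?_
      rw [Nat.cast_add, Nat.cast_one]
      exact add_le_add_left hb2 1
  · rw [Formula.realize_sup, he1, he2]
    constructor
    · rintro (⟨u₁, hu₁⟩ | ⟨u₂, hu₂⟩)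
      · refine ⟨Fin.addCases u₁ (fun _ => v a0), (hreal _).2 (Or.inr (Or.inl ⟨?_, ?_⟩))⟩
        · have hca : (fun k => (Fin.addCases u₁ (fun _ => v a0) :
            Fin (n₁ + n₂) → N) (Fin.castAdd n₂ k)) = u₁ := funext fun k => Fin.addCases_left k
          rw [hca]; exact hu₁
        · intro k; exact Fin.addCases_right k
      · refine ⟨Fin.addCases (fun _ => v a0) u₂, (hreal _).2 (Or.inr (Or.inr ⟨?_, ?_⟩))⟩
        · have hna : (fun k => (Fin.addCases (fun _ => v a0) u₂ :
            Fin (n₁ + n₂) → N) (Fin.natAdd n₁ k)) = u₂ := funext fun k => Fin.addCases_right k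
          rw [hna]; exact hu₂
        · intro k; exact Fin.addCases_left k
    · rintro ⟨w, hw⟩
      rcases (hreal w).1 hw with ⟨hw1, -⟩ | ⟨hw1, -⟩ | ⟨hw1, -⟩
      · exact Or.inl ⟨_, hw1⟩
      · exact Or.inl ⟨_, hw1⟩
      · exact Or.inr ⟨_, hw1⟩


lemma posComb_nonempty {L : Language} {M : Type} [L.Structure M] {α : Type}
    {θ : (L[[M]]).Formula α} (h : PosComb (IsPreferred L M) θ) : Nonempty α := by
  induction h with
  | base hp =>
    obtain ⟨s, _, _, _, hs, _⟩ := hp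
    exact ⟨(hs.choose : α)⟩
  | inf _ _ ih1 _ => exact ih1
  | sup _ _ ih1 _ => exact ih1

lemma good_of_posComb (L : Language) (M : Type) [L.Structure M] {α : Type} [Finite α] (a0 : α)
    {θ : (L[[M]]).Formula α} (h : PosComb (IsPreferred L M) θ) : Good L M θ := by
  induction h with
  | base hp => exact good_of_preferred L M hp (fun R hR => transfer L M R hR)
  | inf _ _ ih1 ih2 => exact ih1.inf' ih2
  | sup _ _ ih1 ih2 => exact Good.sup' a0 ih1 ih2

/-- Every formula in `𝒫` is `T(M)`-equivalent to an "algebraically existential"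
formula `∃x̄ ψ(x̄,ȳ)` with `ψ` quantifier-free and, for some `K`,
`T(M) ⊨ ∀ȳ ∃^{<K} x̄ ψ(x̄,ȳ)`. -/
theorem stmt8 (L : Language) (M : Type) [L.Structure M] {α : Type} [Finite α]
    (φ : (L[[M]]).Formula α) (h : InP L M φ) :
    ∃ (n : ℕ) (ψ : (L[[M]]).Formula (Fin n ⊕ α)) (K : ℕ), ψ.IsQF ∧
      ∀ (N : Type) [(L[[M]]).Structure N], N ⊨ L.elementaryDiagram M →
        ∀ v : α → N,
          {u : Fin n → N | ψ.Realize (Sum.elim u v)}.encard < (K : ℕ∞) ∧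
          (φ.Realize v ↔ ∃ u : Fin n → N, ψ.Realize (Sum.elim u v)) := by
  obtain ⟨ψ0, hpc, heq⟩ := h
  obtain ⟨a0⟩ := posComb_nonempty hpc
  obtain ⟨n, ψ, K, hQF, hG⟩ := good_of_posComb L M a0 hpc
  refine ⟨n, ψ, K + 1, hQF, ?_⟩
  intro N SN hN v
  obtain ⟨hb, he⟩ := hG N hN v
  refine ⟨lt_of_le_of_lt hb ?_, ?_⟩
  · exact_mod_cast Nat.lt_succ_self K
  · rw [heq N hN v]
    exact he
end

section
/- Let M be an infinite mutually algebraic structure and ψ(x̄,y) := ⋀_{i∈I} R_i(x̄_i,y) ∧ ⋀_{j∈J} ¬R_j(x̄_j,y) with I nonempty and each R_i, R_j quantifier-free mutually algebraic with y occurring in each. Let x̄' be the smallest subsequence of x̄ containing all x̄_i (i ∈ I), and K = {j ∈ J : x̄_j ⊆ x̄'}. Then θ(x̄',y) := ⋀_{i∈I} R_i(x̄_i,y) ∧ ⋀_{j∈K} ¬R_j(x̄_j,y) is quantifier-free mutually algebraic, and T(M) ⊨ ∀y (∃x̄ ψ(x̄,y) ↔ ∃x̄' θ(x̄',y)). -/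
open FirstOrder Language Set

/-- The conjunction of a finite set of formulas, as `BoundedFormula.iInf` was defined in the older
Mathlib (taking a `Finset`). -/
noncomputable def finsetIInf {L : Language} {α β : Type} {n : ℕ} (s : Finset β) (f : β → L.BoundedFormula α n) :
    L.BoundedFormula α n :=
  (s.toList.map f).foldr (· ⊓ ·) ⊤

lemma aux_realize_foldr {L' : Language} {α' : Type*} {n : ℕ} {P : Type*} [L'.Structure P]
    (v : α' → P) (xs : Fin n → P) :
    ∀ l : List (L'.BoundedFormula α' n),
      (l.foldr (· ⊓ ·) ⊤).Realize v xs ↔ ∀ φ ∈ l, φ.Realize v xs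
  | [] => by simp
  | a :: l => by simp [aux_realize_foldr v xs l]

lemma aux_realize_finsetIInf {L' : Language} {α' β : Type} {n : ℕ} {P : Type*} [L'.Structure P]
    {s : Finset β} {f : β → L'.BoundedFormula α' n} {v : α' → P} {xs : Fin n → P} :
    (finsetIInf s f).Realize v xs ↔ ∀ b ∈ s, (f b).Realize v xs := by
  rw [finsetIInf, aux_realize_foldr]
  simp

lemma aux_ncard_le_of_encard_le {α : Type*} {s : Set α} {k : ℕ} (h : s.encard ≤ k) :
    s.ncard ≤ k := by
  obtain ⟨hfin, n₀, hn₀, hle⟩ := Set.encard_le_coe_iff.1 h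
  rw [Set.ncard_def, hn₀, ENat.toNat_coe]; exact hle

lemma aux_encard_le_prod {δ : Type*} {ι : Type*} [Fintype ι] {γ : ι → Type*}
    (A : Set δ) (T : ∀ i, Set (γ i)) (f : ∀ i, δ → γ i) (n : ι → ℕ)
    (hT : ∀ i, (T i).encard ≤ (n i : ℕ∞))
    (hmap : ∀ d ∈ A, ∀ i, f i d ∈ T i)
    (hinj : ∀ d ∈ A, ∀ d' ∈ A, (∀ i, f i d = f i d') → d = d') :
    A.encard ≤ ((∏ i, n i : ℕ) : ℕ∞) := by
  haveI hTfin : ∀ i, Finite ↥(T i) := fun i =>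
    Set.finite_coe_iff.2 (Set.finite_of_encard_le_coe (hT i))
  set F : ↥A → ∀ i, ↥(T i) := fun d i => ⟨f i d.1, hmap d.1 d.2 i⟩ with hF
  have hFinj : Function.Injective F := by
    intro d d' h
    exact Subtype.ext (hinj d.1 d.2 d'.1 d'.2 fun i =>
      congrArg Subtype.val (congrFun h i))
  haveI : Finite ↥A := Finite.of_injective F hFinj
  have hA : A.Finite := Set.finite_coe_iff.1 inferInstance
  have h1 : A.ncard ≤ ∏ i, n i := by
    rw [← Nat.card_coe_set_eq]
    calc Nat.card ↥A ≤ Nat.card (∀ i, ↥(T i)) := Nat.card_le_card_of_injective F hFinj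
      _ = ∏ i, Nat.card ↥(T i) := Nat.card_pi
      _ ≤ ∏ i, n i := Finset.prod_le_prod' fun i _ => by
          rw [Nat.card_coe_set_eq]; exact aux_ncard_le_of_encard_le (hT i)
  calc A.encard = (A.ncard : ℕ∞) := by rw [hA.encard_eq_coe, Set.ncard_def]
    _ ≤ _ := Nat.cast_le.2 h1

lemma aux_encard_biUnion_le {δ ε : Type*} {Y : Set ε} (hY : Y.Finite) (W : ε → Set δ) (B : ℕ∞)
    (hW : ∀ m ∈ Y, (W m).encard ≤ B) : (⋃ m ∈ Y, W m).encard ≤ Y.encard * B := by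
  revert hW
  refine Set.Finite.induction_on
    (motive := fun Y _ => (∀ m ∈ Y, (W m).encard ≤ B) → (⋃ m ∈ Y, W m).encard ≤ Y.encard * B)
    Y hY (by simp) ?_
  intro a s ha hs ih hW
  rw [Set.biUnion_insert]
  calc (W a ∪ ⋃ m ∈ s, W m).encard ≤ (W a).encard + (⋃ m ∈ s, W m).encard :=
        Set.encard_union_le _ _
    _ ≤ B + s.encard * B := add_le_add (hW a (Set.mem_insert _ _))
        (ih fun m hm => hW m (Set.mem_insert_of_mem _ hm))
    _ = (insert a s).encard * B := by
        rw [Set.encard_insert_of_notMem ha, add_mul, one_mul, add_comm]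

lemma aux_isQF_foldr {L' : Language} {α' : Type*} {n : ℕ} :
    ∀ l : List (L'.BoundedFormula α' n), (∀ φ ∈ l, φ.IsQF) →
      (l.foldr (· ⊓ ·) ⊤).IsQF
  | [], _ => BoundedFormula.IsQF.top
  | a :: l, h => (h a (List.mem_cons_self)).inf
      (aux_isQF_foldr l fun φ hφ => h φ (List.mem_cons_of_mem _ hφ))

lemma aux_isQF_iInf {L' : Language} {β α' : Type} {n : ℕ} (s : Finset β)
    (f : β → L'.BoundedFormula α' n) (h : ∀ b, (f b).IsQF) :
    (finsetIInf s f).IsQF := by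
  rw [finsetIInf]
  exact aux_isQF_foldr _ (by
    intro φ hφ
    obtain ⟨b, _, rfl⟩ := List.mem_map.1 hφ
    exact h b)

open Classical in
/-- Lemma 2.3, case `I ≠ ∅`: with `ψ(x̄,y) = ⋀_{i∈I} R_i(x̄_i,y) ∧
⋀_{j∈J} ¬R_j(x̄_j,y)`, `x̄'` the union of the `x̄_i` (`i ∈ I`), and
`K = {j ∈ J : x̄_j ⊆ x̄'}`, the formula `θ(x̄',y) = ⋀_{i∈I} R_i ∧ ⋀_{j∈K} ¬R_j` is
quantifier-free mutually algebraic, and `T(M) ⊨ ∀y (∃x̄ ψ(x̄,y) ↔ ∃x̄' θ(x̄',y))`. -/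
theorem stmt10 (L : Language) (M : Type) [L.Structure M] [Infinite M]
    (hMA : IsMAStructure L M) {α : Type} [Finite α]
    {ι κ : Type} [Fintype ι] [Fintype κ] [Nonempty ι]
    (sxI : ι → Set α) (sxJ : κ → Set α)
    (RI : ∀ i : ι, (L[[M]]).Formula (↥(sxI i) ⊕ Unit))
    (RJ : ∀ j : κ, (L[[M]]).Formula (↥(sxJ j) ⊕ Unit))
    (hqfI : ∀ i, (RI i).IsQF) (hMAI : ∀ i, IsMA L M (RI i))
    (hqfJ : ∀ j, (RJ j).IsQF) (hMAJ : ∀ j, IsMA L M (RJ j)) :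
    let θ : (L[[M]]).Formula (↥(⋃ i, sxI i) ⊕ Unit) :=
      (finsetIInf Finset.univ fun i : ι =>
        (RI i).relabel (Sum.map (Set.inclusion (Set.subset_iUnion sxI i)) id)) ⊓
      (finsetIInf Finset.univ fun j : κ =>
        if h : sxJ j ⊆ ⋃ i, sxI i then
          ((RJ j).relabel (Sum.map (Set.inclusion h) id)).not
        else ⊤)
    θ.IsQF ∧ IsMA L M θ ∧
      ∀ (N : Type) [(L[[M]]).Structure N], N ⊨ L.elementaryDiagram M → ∀ b : N,
        ((∃ a : α → N,
            (∀ i : ι, (RI i).Realize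
              (Sum.elim (fun p : ↥(sxI i) => a ↑p) (fun _ => b))) ∧
            (∀ j : κ, ¬ (RJ j).Realize
              (Sum.elim (fun p : ↥(sxJ j) => a ↑p) (fun _ => b)))) ↔
          ∃ a' : ↥(⋃ i, sxI i) → N, θ.Realize (Sum.elim a' (fun _ => b))) := by
  classical
  intro θ
  -- realize characterization of θ
  have hθreal : ∀ (P : Type) [(L[[M]]).Structure P] (w : (↥(⋃ i, sxI i) ⊕ Unit) → P),
      θ.Realize w ↔
        ((∀ i, (RI i).Realize (w ∘ Sum.map (Set.inclusion (Set.subset_iUnion sxI i)) id)) ∧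
         ∀ j, ∀ h : sxJ j ⊆ ⋃ i, sxI i, ¬ (RJ j).Realize (w ∘ Sum.map (Set.inclusion h) id)) := by
    intro P _ w
    show BoundedFormula.Realize (_ ⊓ _) w default ↔ _
    rw [BoundedFormula.realize_inf, aux_realize_finsetIInf, aux_realize_finsetIInf]
    simp only [Finset.mem_univ, true_implies]
    apply and_congr
    · exact forall_congr' fun i => Formula.realize_relabel
    · apply forall_congr'
      intro j
      by_cases h : sxJ j ⊆ ⋃ i, sxI i
      · rw [dif_pos h, forall_prop_of_true h, BoundedFormula.realize_not]
        exact not_congr Formula.realize_relabel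
      · rw [dif_neg h]
        simp only [BoundedFormula.realize_top, true_iff]
        intro h'; exact absurd h' h
  refine ⟨?_, ?_, ?_⟩
  · -- quantifier-free
    refine BoundedFormula.IsQF.inf (aux_isQF_iInf _ _ fun i => ?_)
      (aux_isQF_iInf _ _ fun j => ?_)
    · exact (hqfI i).relabel _
    · by_cases h : sxJ j ⊆ ⋃ i, sxI i
      · rw [dif_pos h]; exact ((hqfJ j).relabel _).not
      · rw [dif_neg h]; exact BoundedFormula.IsQF.top
  · -- mutually algebraic
    choose NI hNI using hMAI
    refine ⟨(∏ i : ι, (NI i + 1)) * (∏ i : ι, (NI i + 1)), ?_⟩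
    intro s hs hsc v
    set B : ℕ := ∏ i : ι, (NI i + 1) with hBdef
    have hB1 : (1 : ℕ) ≤ B := Finset.one_le_prod' fun i _ => Nat.succ_le_succ (Nat.zero_le _)
    set g : ∀ i : ι, (↥(sxI i) ⊕ Unit) → (↥(⋃ i, sxI i) ⊕ Unit) :=
      fun i => Sum.map (Set.inclusion (Set.subset_iUnion sxI i)) id with hgdef
    have hSol : ∀ u : ↥s → M, θ.Realize (combine s u v) →
        ∀ i, (RI i).Realize (combine s u v ∘ g i) :=
      fun u hu i => ((hθreal M (combine s u v)).1 hu).1 i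
    set Y : Set M :=
      (fun u : ↥s → M => combine s u v (Sum.inr ())) '' {u | θ.Realize (combine s u v)}
      with hYdef
    set W : M → Set (↥s → M) := fun m =>
      {u | (∀ i, (RI i).Realize (combine s u v ∘ g i)) ∧ combine s u v (Sum.inr ()) = m}
      with hWdef
    -- Claim 1 : Y is small
    have claimY : Y.encard ≤ (B : ℕ∞) := by
      by_cases hy : (Sum.inr () : ↥(⋃ i, sxI i) ⊕ Unit) ∈ s
      · obtain ⟨z, hz⟩ := hsc
        rcases z with p | u0
        · obtain ⟨i0, hpi0⟩ := Set.mem_iUnion.1 p.2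
          set s0 : Set (↥(sxI i0) ⊕ Unit) := {x | g i0 x ∈ s} with hs0def
          have h1 : (Sum.inr () : ↥(sxI i0) ⊕ Unit) ∈ s0 := hy
          have hgx0 : g i0 (Sum.inl ⟨p.1, hpi0⟩) = Sum.inl p := by
            exact congrArg Sum.inl (Subtype.ext rfl)
          have hx0 : (Sum.inl ⟨p.1, hpi0⟩ : ↥(sxI i0) ⊕ Unit) ∈ s0ᶜ := by
            intro hmem
            rw [Set.mem_setOf_eq, hgx0] at hmem
            exact hz hmem
          set v0 : ↥s0ᶜ → M := fun x => v ⟨g i0 x.1, x.2⟩ with hv0def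
          have hT0 := hNI i0 s0 ⟨_, h1⟩ ⟨_, hx0⟩ v0
          have hsub : Y ⊆ (fun t : ↥s0 → M => t ⟨Sum.inr (), h1⟩) ''
              {t | (RI i0).Realize (combine s0 t v0)} := by
            rintro _ ⟨u, hu, rfl⟩
            refine ⟨fun x : ↥s0 => u ⟨g i0 x.1, x.2⟩, ?_, ?_⟩
            · show (RI i0).Realize _
              have hass : combine s u v ∘ g i0
                  = combine s0 (fun x : ↥s0 => u ⟨g i0 x.1, x.2⟩) v0 := by
                funext x
                simp only [Function.comp_apply, combine]
                by_cases hgx : x ∈ s0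
                · rw [dif_pos (show g i0 x ∈ s from hgx), dif_pos hgx]
                · rw [dif_neg (show ¬ g i0 x ∈ s from hgx), dif_neg hgx]
              rw [← hass]
              exact hSol u hu i0
            · show u _ = _
              simp only [combine]
              rw [dif_pos hy]
              rfl
          refine le_trans (Set.encard_le_encard hsub) (le_trans (Set.encard_image_le _ _)
            (le_trans hT0 (Nat.cast_le.2 ?_)))
          exact le_trans (Nat.le_succ _)
            (Finset.single_le_prod' (fun i _ => Nat.succ_le_succ (Nat.zero_le _))
              (Finset.mem_univ i0))
        · cases u0
          exact absurd hy hz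
      · have hsub : Y ⊆ {v ⟨Sum.inr (), hy⟩} := by
          rintro _ ⟨u, _, rfl⟩
          simp only [Set.mem_singleton_iff, combine]
          rw [dif_neg hy]
        refine le_trans (Set.encard_le_encard hsub) ?_
        rw [Set.encard_singleton]
        exact_mod_cast hB1
    -- Claim 2 : each W m is small
    have claimW : ∀ m : M, (W m).encard ≤ (B : ℕ∞) := by
      intro m
      set s' : ∀ i : ι, Set (↥(sxI i) ⊕ Unit) :=
        fun i => {x | g i x ∈ s ∧ x.isLeft = true} with hs'def
      set wctx : ∀ i : ι, ↥(s' i)ᶜ → M :=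
        fun i x => if hx : g i x.1 ∈ s then m else v ⟨g i x.1, hx⟩ with hwctxdef
      set T : ∀ i : ι, Set (↥(s' i) → M) := fun i =>
        if (s' i).Nonempty then {t | (RI i).Realize (combine (s' i) t (wctx i))}
        else Set.univ with hTdef
      set f : ∀ i : ι, (↥s → M) → (↥(s' i) → M) :=
        fun i u x => u ⟨g i x.1, x.2.1⟩ with hfdef
      have hineq := aux_encard_le_prod (W m) T f (fun i => NI i + 1) ?_ ?_ ?_
      · exact le_trans hineq (by rw [hBdef])
      · -- bounds on T i
        intro i
        by_cases hne : (s' i).Nonempty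
        · rw [hTdef]
          simp only [if_pos hne]
          have hcne : ((s' i)ᶜ).Nonempty := by
            refine ⟨Sum.inr (), ?_⟩
            intro hmem
            simpa using hmem.2
          exact le_trans (hNI i (s' i) hne hcne (wctx i)) (Nat.cast_le.2 (Nat.le_succ _))
        · rw [hTdef]
          simp only [if_neg hne]
          have hempty : s' i = ∅ := Set.not_nonempty_iff_eq_empty.1 hne
          refine le_trans (Set.encard_le_one_iff.2 fun a b _ _ => funext fun x => ?_)
            (by exact_mod_cast Nat.succ_le_succ (Nat.zero_le _))
          exact absurd x.2 (Set.eq_empty_iff_forall_notMem.1 hempty x.1)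
      · -- maps into T i
        intro u hu i
        rw [hTdef]
        by_cases hne : (s' i).Nonempty
        · simp only [if_pos hne]
          have hass : combine s u v ∘ g i = combine (s' i) (f i u) (wctx i) := by
            funext x
            simp only [Function.comp_apply, combine]
            by_cases hx : x ∈ s' i
            · rw [dif_pos (show g i x ∈ s from hx.1), dif_pos hx]
            · rw [dif_neg hx]
              by_cases hgx : g i x ∈ s
              · rw [dif_pos hgx]
                rcases x with q | u1
                · exact absurd ⟨hgx, rfl⟩ hx
                · cases u1
                  have hu2 := hu.2
                  simp only [combine] at hu2
                  rw [dif_pos (show (Sum.inr () : ↥(⋃ i, sxI i) ⊕ Unit) ∈ s from hgx)] at hu2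
                  rw [hwctxdef]
                  simp only [dif_pos hgx]
                  exact hu2
              · rw [dif_neg hgx, hwctxdef]
                simp only [dif_neg hgx]
          show f i u ∈ {t | (RI i).Realize (combine (s' i) t (wctx i))}
          rw [Set.mem_setOf_eq, ← hass]
          exact hu.1 i
        · simp only [if_neg hne]
          exact Set.mem_univ _
      · -- injectivity
        intro u hu u' hu' h
        funext x
        obtain ⟨x1, hx1⟩ := x
        rcases x1 with p | u1
        · obtain ⟨i, hpi⟩ := Set.mem_iUnion.1 p.2
          have hgx : g i (Sum.inl ⟨p.1, hpi⟩) = Sum.inl p :=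
            congrArg Sum.inl (Subtype.ext rfl)
          have hmem : (Sum.inl ⟨p.1, hpi⟩ : ↥(sxI i) ⊕ Unit) ∈ s' i :=
            ⟨show g i (Sum.inl ⟨p.1, hpi⟩) ∈ s by rw [hgx]; exact hx1, rfl⟩
          have := congrFun (h i) ⟨Sum.inl ⟨p.1, hpi⟩, hmem⟩
          simp only [hfdef] at this
          calc u ⟨Sum.inl p, hx1⟩ = u ⟨g i (Sum.inl ⟨p.1, hpi⟩), hmem.1⟩ := by
                exact congrArg u (Subtype.ext hgx.symm)
            _ = u' ⟨g i (Sum.inl ⟨p.1, hpi⟩), hmem.1⟩ := this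
            _ = u' ⟨Sum.inl p, hx1⟩ := congrArg u' (Subtype.ext hgx)
        · cases u1
          have h2 := hu.2
          have h2' := hu'.2
          simp only [combine] at h2 h2'
          rw [dif_pos hx1] at h2 h2'
          rw [h2, h2']
    -- assemble
    have hYfin : Y.Finite := Set.finite_of_encard_le_coe claimY
    have hsub : {u : ↥s → M | θ.Realize (combine s u v)} ⊆ ⋃ m ∈ Y, W m := by
      intro u hu
      refine Set.mem_biUnion ⟨u, hu, rfl⟩ ⟨hSol u hu, rfl⟩
    refine le_trans (Set.encard_le_encard hsub) (le_trans
      (aux_encard_biUnion_le hYfin W (B : ℕ∞) fun m _ => claimW m) ?_)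
    rw [Nat.cast_mul]
    exact mul_le_mul' claimY le_rfl
  · -- the equivalence
    intro N instN hNmod b
    constructor
    · -- forward direction
      rintro ⟨a, hpos, hneg⟩
      refine ⟨fun p => a ↑p, (hθreal N _).2 ⟨fun i => ?_, fun j hj => ?_⟩⟩
      · have e1 : (Sum.elim (fun p : ↥(⋃ i, sxI i) => a ↑p) (fun _ : Unit => b))
            ∘ Sum.map (Set.inclusion (Set.subset_iUnion sxI i)) id
            = Sum.elim (fun p : ↥(sxI i) => a ↑p) (fun _ : Unit => b) := by
          funext x; rcases x with p | u <;> rfl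
        rw [e1]
        exact hpos i
      · have e1 : (Sum.elim (fun p : ↥(⋃ i, sxI i) => a ↑p) (fun _ : Unit => b))
            ∘ Sum.map (Set.inclusion hj) id
            = Sum.elim (fun p : ↥(sxJ j) => a ↑p) (fun _ : Unit => b) := by
          funext x; rcases x with p | u <;> rfl
        rw [e1]
        exact hneg j
    · -- backward direction : via a transfer sentence
      rintro ⟨a', hθa⟩
      set ψf : (L[[M]]).Formula (α ⊕ Unit) :=
        (finsetIInf Finset.univ fun i : ι =>
          (RI i).relabel (Sum.map (Subtype.val : ↥(sxI i) → α) id)) ⊓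
        (finsetIInf Finset.univ fun j : κ =>
          ((RJ j).relabel (Sum.map (Subtype.val : ↥(sxJ j) → α) id)).not) with hψfdef
      have hψreal : ∀ (P : Type) [(L[[M]]).Structure P] (w : α ⊕ Unit → P),
          ψf.Realize w ↔
            ((∀ i, (RI i).Realize (w ∘ Sum.map (Subtype.val : ↥(sxI i) → α) id)) ∧
             ∀ j, ¬ (RJ j).Realize (w ∘ Sum.map (Subtype.val : ↥(sxJ j) → α) id)) := by
        intro P _ w
        show BoundedFormula.Realize (_ ⊓ _) w default ↔ _
        rw [BoundedFormula.realize_inf, aux_realize_finsetIInf,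
          aux_realize_finsetIInf]
        simp only [Finset.mem_univ, true_implies]
        apply and_congr
        · exact forall_congr' fun i => Formula.realize_relabel
        · refine forall_congr' fun j => ?_
          rw [BoundedFormula.realize_not]
          exact not_congr Formula.realize_relabel
      set χ : (L[[M]]).Sentence :=
        ((((θ.relabel (Sum.elim (fun p : ↥(⋃ i, sxI i) => Sum.inr p) (fun _ : Unit => Sum.inl ()))).iExs
          ↥(⋃ i, sxI i)).imp
          ((ψf.relabel (Sum.elim (fun x : α => Sum.inr x) (fun _ : Unit => Sum.inl ()))).iExs α)).relabel
          (fun u : Unit => (Sum.inr u : Empty ⊕ Unit))).iAlls Unit with hχdef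
      have hχreal : ∀ (P : Type) [(L[[M]]).Structure P], (P ⊨ χ) ↔ ∀ c : P,
          (∃ w : ↥(⋃ i, sxI i) → P, θ.Realize (Sum.elim w (fun _ : Unit => c))) →
          ∃ a : α → P,
            (∀ i, (RI i).Realize (Sum.elim (fun p : ↥(sxI i) => a ↑p) (fun _ : Unit => c))) ∧
            (∀ j, ¬ (RJ j).Realize (Sum.elim (fun p : ↥(sxJ j) => a ↑p) (fun _ : Unit => c))) := by
        intro P _
        show Formula.Realize χ (default : Empty → P) ↔ _
        rw [hχdef, Formula.realize_iAlls]
        simp only [Formula.realize_relabel]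
        have key : ∀ vb : Unit → P,
            Formula.Realize
              (((θ.relabel (Sum.elim (fun p : ↥(⋃ i, sxI i) => Sum.inr p)
                  (fun _ : Unit => Sum.inl ()))).iExs ↥(⋃ i, sxI i)).imp
                ((ψf.relabel (Sum.elim (fun x : α => Sum.inr x) (fun _ : Unit => Sum.inl ()))).iExs α)) vb ↔
            ((∃ w : ↥(⋃ i, sxI i) → P, θ.Realize (Sum.elim w (fun _ : Unit => vb ()))) →
             ∃ a : α → P,
               (∀ i, (RI i).Realize (Sum.elim (fun p : ↥(sxI i) => a ↑p)
                  (fun _ : Unit => vb ()))) ∧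
               (∀ j, ¬ (RJ j).Realize (Sum.elim (fun p : ↥(sxJ j) => a ↑p)
                  (fun _ : Unit => vb ())))) := by
          intro vb
          rw [Formula.realize_imp, Formula.realize_iExs, Formula.realize_iExs]
          simp only [Formula.realize_relabel]
          apply imp_congr
          · apply exists_congr; intro w
            have e : (Sum.elim vb w ∘
                (Sum.elim (fun p : ↥(⋃ i, sxI i) => Sum.inr p) (fun _ : Unit => Sum.inl ())))
                = Sum.elim w (fun _ : Unit => vb ()) := by
              funext x; rcases x with q | u
              · rfl
              · cases u; rfl
            rw [e]
          · apply exists_congr; intro a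
            have e : (Sum.elim vb a ∘
                (Sum.elim (fun x : α => Sum.inr x) (fun _ : Unit => Sum.inl ())))
                = Sum.elim a (fun _ : Unit => vb ()) := by
              funext x; rcases x with q | u
              · rfl
              · cases u; rfl
            rw [e, hψreal P (Sum.elim a (fun _ : Unit => vb ()))]
            apply and_congr
            · apply forall_congr'; intro i
              have e2 : (Sum.elim a (fun _ : Unit => vb ()))
                  ∘ Sum.map (Subtype.val : ↥(sxI i) → α) id
                  = Sum.elim (fun p : ↥(sxI i) => a ↑p) (fun _ : Unit => vb ()) := by
                funext x; rcases x with q | u <;> rfl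
              rw [e2]
            · apply forall_congr'; intro j
              have e2 : (Sum.elim a (fun _ : Unit => vb ()))
                  ∘ Sum.map (Subtype.val : ↥(sxJ j) → α) id
                  = Sum.elim (fun p : ↥(sxJ j) => a ↑p) (fun _ : Unit => vb ()) := by
                funext x; rcases x with q | u <;> rfl
              rw [e2]
        constructor
        · intro H c
          exact (key _).1 (H (fun _ => c))
        · intro H i
          exact (key _).2 (H (i ()))
      -- the sentence is true in M
      have hMχ : M ⊨ χ := by
        refine (hχreal M).2 ?_
        rintro c ⟨a'', hθ''⟩
        obtain ⟨hpos', hneg'⟩ := (hθreal M _).1 hθ''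
        -- bad sets are finite
        have hD : ∀ j : κ, ¬ sxJ j ⊆ ⋃ i, sxI i →
            {c0 : M | (RJ j).Realize (Sum.elim
              (fun p : ↥(sxJ j) => if hp : (p : α) ∈ ⋃ i, sxI i then a'' ⟨p, hp⟩ else c0)
              (fun _ : Unit => c))}.Finite := by
          intro j hj
          obtain ⟨NJj, hNJj⟩ := hMAJ j
          obtain ⟨q, hq, hqU⟩ := Set.not_subset.1 hj
          set sj : Set (↥(sxJ j) ⊕ Unit) :=
            {x | ∃ p : ↥(sxJ j), x = Sum.inl p ∧ (p : α) ∉ ⋃ i, sxI i} with hsjdef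
          have hq1 : (Sum.inl ⟨q, hq⟩ : ↥(sxJ j) ⊕ Unit) ∈ sj := ⟨⟨q, hq⟩, rfl, hqU⟩
          have hq2 : (Sum.inr () : ↥(sxJ j) ⊕ Unit) ∈ sjᶜ := by
            rintro ⟨p, hpe, -⟩
            exact Sum.inr_ne_inl hpe
          set vj : ↥sjᶜ → M := fun x =>
            Sum.elim (fun p : ↥(sxJ j) =>
                if hp : (p : α) ∈ ⋃ i, sxI i then a'' ⟨p, hp⟩ else c)
              (fun _ : Unit => c) x.1 with hvjdef
          have hbound := hNJj sj ⟨_, hq1⟩ ⟨_, hq2⟩ vj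
          have hsub : {c0 : M | (RJ j).Realize (Sum.elim
              (fun p : ↥(sxJ j) => if hp : (p : α) ∈ ⋃ i, sxI i then a'' ⟨p, hp⟩ else c0)
              (fun _ : Unit => c))} ⊆ (fun t : ↥sj → M => t ⟨_, hq1⟩) ''
              {t | (RJ j).Realize (combine sj t vj)} := by
            intro c0 hc0
            refine ⟨fun _ => c0, ?_, rfl⟩
            show (RJ j).Realize _
            have hass : combine sj (fun _ : ↥sj => c0) vj
                = Sum.elim (fun p : ↥(sxJ j) =>
                    if hp : (p : α) ∈ ⋃ i, sxI i then a'' ⟨p, hp⟩ else c0)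
                  (fun _ : Unit => c) := by
              funext x
              simp only [combine]
              by_cases hx : x ∈ sj
              · rw [dif_pos hx]
                obtain ⟨p, rfl, hpU⟩ := hx
                simp only [Sum.elim_inl]
                rw [dif_neg hpU]
              · rw [dif_neg hx, hvjdef]
                rcases x with p | u1
                · have hpU : (p : α) ∈ ⋃ i, sxI i := by
                    by_contra hpU
                    exact hx ⟨p, rfl, hpU⟩
                  simp only [Sum.elim_inl]
                  rw [dif_pos hpU, dif_pos hpU]
                · cases u1; rfl
            rw [hass]
            exact hc0
          exact ((Set.finite_of_encard_le_coe hbound).image _).subset hsub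
        set Dall : Set M := ⋃ j ∈ {j : κ | ¬ sxJ j ⊆ ⋃ i, sxI i},
          {c0 : M | (RJ j).Realize (Sum.elim
            (fun p : ↥(sxJ j) => if hp : (p : α) ∈ ⋃ i, sxI i then a'' ⟨p, hp⟩ else c0)
            (fun _ : Unit => c))} with hDalldef
        have hDallfin : Dall.Finite :=
          Set.Finite.biUnion (Set.toFinite _) fun j hj => hD j hj
        obtain ⟨c0, hc0⟩ := hDallfin.infinite_compl.nonempty
        set aa : α → M := fun x => if hx : x ∈ ⋃ i, sxI i then a'' ⟨x, hx⟩ else c0 with haadef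
        refine ⟨aa, fun i => ?_, fun j => ?_⟩
        · have e1 : Sum.elim (fun p : ↥(sxI i) => aa ↑p) (fun _ : Unit => c)
              = (Sum.elim a'' (fun _ : Unit => c))
                ∘ Sum.map (Set.inclusion (Set.subset_iUnion sxI i)) id := by
            funext x
            rcases x with p | u
            · show aa ↑p = a'' (Set.inclusion (Set.subset_iUnion sxI i) p)
              simp only [haadef]
              rw [dif_pos (Set.subset_iUnion sxI i p.2)]
            · rfl
          rw [e1]
          exact hpos' i
        · by_cases hj : sxJ j ⊆ ⋃ i, sxI i
          · have e2 : Sum.elim (fun p : ↥(sxJ j) => aa ↑p) (fun _ : Unit => c)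
                = (Sum.elim a'' (fun _ : Unit => c)) ∘ Sum.map (Set.inclusion hj) id := by
              funext x
              rcases x with p | u
              · show aa ↑p = a'' (Set.inclusion hj p)
                simp only [haadef]
                rw [dif_pos (hj p.2)]
              · rfl
            rw [e2]
            exact hneg' j hj
          · intro hr
            refine hc0 (Set.mem_biUnion hj ?_)
            exact hr
      -- transfer to N and conclude
      have hNχ : N ⊨ χ := by
        haveI := hNmod
        exact Theory.realize_sentence_of_mem (L.elementaryDiagram M)
          (mem_completeTheory.2 hMχ)
      exact (hχreal N).1 hNχ b ⟨a', hθa⟩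
end

section
/- Let M be an L-structure and R(x̄,ȳ) an L(M)-formula such that T(M) ⊨ ∃^{<N} x̄ȳ R(x̄,ȳ) (as a formula with all variables existentially counted, i.e., R has fewer than N total solutions in any model of T(M)). Then for every r ∈ ℕ, the formula ∃^{=r} x̄ R(x̄,ȳ) is T(M)-equivalent to the disjunction over m < N of (∃^{=m} w̄ R'(w̄, y*) ∧ θ_m(ȳ)), following the coding of Theorem 2.4(1)⇒(2): counting solutions with ȳ free can be reduced to counting solutions of a formula with a single free variable together with equality constraints. -/
open FirstOrder Language Set

/-- the coding in (1) ⇒ (2) of Theorem 2.4: if `R(x̄,ȳ) ∈ 𝒜`, `y* ∈ ȳ` is a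
chosen variable with `ȳ = ȳ'⌢y*`, and `N` bounds the number of solutions of `R(x̄ȳ', y*)` for
every value of `y*` (in every model of `T(M)`), then `∃^{=r} x̄ R(x̄,ȳ)` is `T(M)`-equivalent
to `⋁_{m<N} (∃^{=m} w̄ R(w̄,y*) ∧ θ_m(ȳ))`, where `θ_m(ȳ)` asserts the existence of `m`
distinct tuples `ū_i v̄_i` each satisfying `R(ū_i v̄_i, y*)`, exactly `r` of the `v̄_i` being
equal to `ȳ'`. Here `α` indexes `x̄`, `β` indexes `ȳ'`, and `Unit` indexes `y*`. -/
theorem stmt18 (L : Language) (M : Type) [L.Structure M] {α β : Type} [Finite α] [Finite β]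
    (R : (L[[M]]).Formula (α ⊕ (β ⊕ Unit))) (hqf : R.IsQF) (hma : IsMA L M R) (Nb : ℕ)
    (hbound : ∀ (N' : Type) [(L[[M]]).Structure N'], N' ⊨ L.elementaryDiagram M →
      ∀ c : N',
        {w : α ⊕ β → N' | R.Realize
          (Sum.elim (w ∘ Sum.inl) (Sum.elim (w ∘ Sum.inr) (fun _ => c)))}.encard < (Nb : ℕ∞))
    (r : ℕ)
    (χ : (L[[M]]).Formula (β ⊕ Unit))
    (hχ : ∀ (N' : Type) [(L[[M]]).Structure N'], N' ⊨ L.elementaryDiagram M →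
      ∀ v : β ⊕ Unit → N',
        (χ.Realize v ↔ {u : α → N' | R.Realize (Sum.elim u v)}.encard = (r : ℕ∞)))
    (ρ : ℕ → (L[[M]]).Formula (β ⊕ Unit))
    (hρ : ∀ (m : ℕ) (N' : Type) [(L[[M]]).Structure N'], N' ⊨ L.elementaryDiagram M →
      ∀ v : β ⊕ Unit → N',
        ((ρ m).Realize v ↔
          {w : α ⊕ β → N' | R.Realize (Sum.elim (w ∘ Sum.inl)
            (Sum.elim (w ∘ Sum.inr) (fun _ => v (Sum.inr ()))))}.encard = (m : ℕ∞)))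
    (θ : ℕ → (L[[M]]).Formula (β ⊕ Unit))
    (hθ : ∀ (m : ℕ) (N' : Type) [(L[[M]]).Structure N'], N' ⊨ L.elementaryDiagram M →
      ∀ v : β ⊕ Unit → N',
        ((θ m).Realize v ↔
          ∃ f : Fin m → (α ⊕ β → N'), Function.Injective f ∧
            (∀ i, R.Realize (Sum.elim (f i ∘ Sum.inl)
              (Sum.elim (f i ∘ Sum.inr) (fun _ => v (Sum.inr ()))))) ∧
            {i : Fin m | ∀ p : β, f i (Sum.inr p) = v (Sum.inl p)}.ncard = r)) :
    ∀ (N' : Type) [(L[[M]]).Structure N'], N' ⊨ L.elementaryDiagram M →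
      ∀ v : β ⊕ Unit → N',
        (χ.Realize v ↔ ∃ m, m < Nb ∧ (ρ m).Realize v ∧ (θ m).Realize v) := by
  intro N' _inst hN v
  classical
  -- Notation
  set c : N' := v (Sum.inr ()) with hc
  set S : Set (α ⊕ β → N') :=
    {w | R.Realize (Sum.elim (w ∘ Sum.inl) (Sum.elim (w ∘ Sum.inr) (fun _ => c)))} with hSdef
  set A : Set (α → N') := {u | R.Realize (Sum.elim u v)} with hAdef
  have hSenc : S.encard < (Nb : ℕ∞) := hbound N' hN c
  have hSfin : S.Finite := Set.encard_lt_top_iff.mp (lt_of_lt_of_le hSenc le_top)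
  -- the embedding
  set e : (α → N') → (α ⊕ β → N') := fun u => Sum.elim u (v ∘ Sum.inl) with he
  have einj : Function.Injective e := by
    intro u1 u2 h
    funext a
    exact congrFun h (Sum.inl a)
  have hmem : ∀ u : α → N', e u ∈ S ↔ u ∈ A := by
    intro u
    have hfe : Sum.elim ((e u) ∘ Sum.inl) (Sum.elim ((e u) ∘ Sum.inr) (fun _ => c))
        = Sum.elim u v := by
      funext x
      rcases x with a | p | u'
      · rfl
      · rfl
      · cases u'; rfl
    simp only [hSdef, Set.mem_setOf_eq, hfe, hAdef]
  set Sm : Set (α ⊕ β → N') := {w ∈ S | ∀ p : β, w (Sum.inr p) = v (Sum.inl p)} with hSm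
  have hSmeq : Sm = e '' A := by
    ext w
    constructor
    · rintro ⟨hwS, hmatch⟩
      refine ⟨w ∘ Sum.inl, ?_, ?_⟩
      · have hw : e (w ∘ Sum.inl) = w := by
          funext x
          rcases x with a | p
          · rfl
          · exact (hmatch p).symm
        exact (hmem _).mp (by rwa [hw])
      · funext x
        rcases x with a | p
        · rfl
        · exact (hmatch p).symm
    · rintro ⟨u, huA, rfl⟩
      exact ⟨(hmem u).mpr huA, fun p => rfl⟩
  have hSmenc : Sm.encard = A.encard := by rw [hSmeq, einj.encard_image]
  have hSmfin : Sm.Finite := hSfin.subset (fun w hw => hw.1)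
  -- membership in S equals the realize condition
  have hSreal : ∀ w : α ⊕ β → N',
      R.Realize (Sum.elim (w ∘ Sum.inl) (Sum.elim (w ∘ Sum.inr) (fun _ => v (Sum.inr ()))))
      ↔ w ∈ S := by
    intro w; exact Iff.rfl
  constructor
  · intro hχv
    have hA : A.encard = (r : ℕ∞) := (hχ N' hN v).mp hχv
    refine ⟨S.ncard, ?_, ?_, ?_⟩
    · have : (S.ncard : ℕ∞) < (Nb : ℕ∞) := by rw [hSfin.cast_ncard_eq]; exact hSenc
      exact_mod_cast this
    · rw [hρ S.ncard N' hN v]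
      exact hSfin.cast_ncard_eq.symm
    · rw [hθ S.ncard N' hN v]
      haveI := hSfin.to_subtype
      have hcard : Nat.card S = S.ncard := Nat.card_coe_set_eq S
      set q : S ≃ Fin S.ncard := Finite.equivFinOfCardEq hcard with hq
      set f : Fin S.ncard → (α ⊕ β → N') := fun i => ((q.symm i : S) : α ⊕ β → N') with hf
      have finj : Function.Injective f := fun i j h =>
        q.symm.injective (Subtype.coe_injective h)
      have hfS : ∀ i, f i ∈ S := fun i => (q.symm i).2
      refine ⟨f, finj, fun i => (hSreal _).mpr (hfS i), ?_⟩
      set T : Set (Fin S.ncard) := {i | ∀ p : β, f i (Sum.inr p) = v (Sum.inl p)} with hT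
      have himg : f '' T = Sm := by
        ext w
        constructor
        · rintro ⟨i, hiT, rfl⟩
          exact ⟨hfS i, hiT⟩
        · rintro ⟨hwS, hmatch⟩
          refine ⟨q ⟨w, hwS⟩, ?_, ?_⟩
          · show ∀ p : β, f (q ⟨w, hwS⟩) (Sum.inr p) = v (Sum.inl p)
            intro p
            have : f (q ⟨w, hwS⟩) = w := by
              simp only [hf, Equiv.symm_apply_apply]
            rw [this]; exact hmatch p
          · simp only [hf, Equiv.symm_apply_apply]
      have hT_card : T.ncard = Sm.ncard := by
        rw [← himg, Set.ncard_image_of_injective _ finj]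
      have hSm_r : Sm.ncard = r := by
        have : (Sm.ncard : ℕ∞) = (r : ℕ∞) := by
          rw [hSmfin.cast_ncard_eq, hSmenc, hA]
        exact_mod_cast this
      rw [hT_card, hSm_r]
  · rintro ⟨m, hmNb, hρm, hθm⟩
    have hSm' : S.encard = (m : ℕ∞) := (hρ m N' hN v).mp hρm
    obtain ⟨f, finj, hfR, hcount⟩ := (hθ m N' hN v).mp hθm
    have hfS : ∀ i, f i ∈ S := fun i => (hSreal _).mp (hfR i)
    have hrange : Set.range f = S := by
      have hsub : Set.range f ⊆ S := by rintro _ ⟨i, rfl⟩; exact hfS i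
      have hler : S.encard ≤ (Set.range f).encard := by
        rw [← Set.image_univ, finj.encard_image, hSm']
        simp [Set.encard_univ, ENat.card_eq_coe_fintype_card]
      exact hSfin.eq_of_subset_of_encard_le' hsub hler
    set T : Set (Fin m) := {i | ∀ p : β, f i (Sum.inr p) = v (Sum.inl p)} with hT
    have himg : f '' T = Sm := by
      ext w
      constructor
      · rintro ⟨i, hiT, rfl⟩
        exact ⟨hfS i, hiT⟩
      · rintro ⟨hwS, hmatch⟩
        have : w ∈ Set.range f := hrange ▸ hwS
        obtain ⟨i, rfl⟩ := this
        exact ⟨i, hmatch, rfl⟩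
    have hSm_r : Sm.ncard = r := by
      rw [← himg, Set.ncard_image_of_injective _ finj]
      exact hcount
    have hA : A.encard = (r : ℕ∞) := by
      rw [← hSmenc, ← hSmfin.cast_ncard_eq, hSm_r]
    exact (hχ N' hN v).mpr hA
end
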